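/- arXiv:2107.09193 — 4 statements merged into one kernel-verified Lean document; each statement's English description precedes it below -/
import Mathlib

section
/- Let R be a commutative ring and M a finitely generated R-module. Then M is a projective module of constant rank r if and only if Fitt_{r-1}(M) = 0 and Fitt_r(M) = R. -/
/-!
STATEMENT 4: for a commutative ring `R` and a finitely generated `R`-module `M`, `M` is a
projective module of constant rank `r` (i.e. projective and free of rank `r` after localizing
at every prime) if and only if `Fitt_{r-1}(M) = 0` and `Fitt_r(M) = R`.
-/

/-- The `j`-th Fitting ideal of a (finitely generated) `R`-module `M`.  For a presentation
`F →^φ R^n → M → 0` it is the ideal `I_{n-j}(φ)` generated by the `(n-j) × (n-j)` minors of a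
presentation matrix `φ`, i.e. by the determinants of all `(n-j) × (n-j)` matrices whose columns
are relations (elements of the kernel of `R^n → M`) with row indices chosen among the `n` rows;
by Fitting's lemma this ideal is independent of the chosen presentation, so we may take the
supremum over all presentations.  (With the conventions `I_k(φ) = R` for `k ≤ 0`, realized here
via the determinant of the empty matrix.) -/
noncomputable def fittingIdeal (R : Type*) [CommRing R] (M : Type*) [AddCommGroup M]
    [Module R M] (j : ℕ) : Ideal R :=
  ⨆ (n : ℕ) (π : (Fin n → R) →ₗ[R] M) (_ : Function.Surjective π),
    Ideal.span {x : R | ∃ (v : Fin (n - j) → Fin n → R) (ρ : Fin (n - j) → Fin n),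
      (∀ l, π (v l) = 0) ∧ x = Matrix.det (Matrix.of fun i l => v l (ρ i))}

/-- The Fitting ideals indexed by integers, with the convention `Fitt_j(M) = 0` for `j < 0`
(so that `Fitt_{r-1}` makes sense also for `r = 0`). -/
noncomputable def fittingIdealZ (R : Type*) [CommRing R] (M : Type*) [AddCommGroup M]
    [Module R M] (j : ℤ) : Ideal R :=
  if j < 0 then ⊥ else fittingIdeal R M j.toNat

/- ================= Auxiliary development ================= -/

set_option maxHeartbeats 1000000

open Function Matrix

namespace FittingProofAux

variable {R : Type*} [CommRing R] {M : Type*} [AddCommGroup M] [Module R M]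

/-- The span of the `k × k` minors of relation matrices for a surjection `π : R^n → M`. -/
noncomputable def minorsSpan (n k : ℕ) (π : (Fin n → R) →ₗ[R] M) : Ideal R :=
  Ideal.span {x : R | ∃ (v : Fin k → Fin n → R) (ρ : Fin k → Fin n),
    (∀ l, π (v l) = 0) ∧ x = Matrix.det (Matrix.of fun i l => v l (ρ i))}

lemma det_mem_minorsSpan {n k : ℕ} {π : (Fin n → R) →ₗ[R] M}
    (v : Fin k → Fin n → R) (ρ : Fin k → Fin n) (hv : ∀ l, π (v l) = 0) :
    Matrix.det (Matrix.of fun i l => v l (ρ i)) ∈ minorsSpan n k π :=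
  Ideal.subset_span ⟨v, ρ, hv, rfl⟩

lemma fittingIdeal_eq (j : ℕ) :
    fittingIdeal R M j = ⨆ (n : ℕ) (π : (Fin n → R) →ₗ[R] M) (_ : Surjective π),
      minorsSpan n (n - j) π := rfl

lemma minorsSpan_le_fittingIdeal {n : ℕ} {π : (Fin n → R) →ₗ[R] M} (hπ : Surjective π) (j : ℕ) :
    minorsSpan n (n - j) π ≤ fittingIdeal R M j := by
  rw [fittingIdeal_eq]
  exact le_iSup_of_le n (le_iSup_of_le π (le_iSup_of_le hπ le_rfl))

lemma fittingIdeal_le {j : ℕ} {I : Ideal R}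
    (h : ∀ (n : ℕ) (π : (Fin n → R) →ₗ[R] M), Surjective π → minorsSpan n (n - j) π ≤ I) :
    fittingIdeal R M j ≤ I := by
  rw [fittingIdeal_eq]
  exact iSup_le fun n => iSup_le fun π => iSup_le fun hπ => h n π hπ

lemma minorsSpan_le {n k : ℕ} {π : (Fin n → R) →ₗ[R] M} {I : Ideal R}
    (h : ∀ (v : Fin k → Fin n → R) (ρ : Fin k → Fin n), (∀ l, π (v l) = 0) →
      Matrix.det (Matrix.of fun i l => v l (ρ i)) ∈ I) : minorsSpan n k π ≤ I := by
  rw [minorsSpan, Ideal.span_le]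
  rintro x ⟨v, ρ, hv, rfl⟩
  exact h v ρ hv

lemma det_mem_fittingIdeal' {n j m : ℕ} {π : (Fin n → R) →ₗ[R] M} (hπ : Surjective π)
    (hm : m = n - j) (v : Fin m → Fin n → R) (ρ : Fin m → Fin n) (hv : ∀ l, π (v l) = 0) :
    Matrix.det (Matrix.of fun i l => v l (ρ i)) ∈ fittingIdeal R M j := by
  subst hm
  exact minorsSpan_le_fittingIdeal hπ j (det_mem_minorsSpan v ρ hv)

/-! ### Concatenation of presentations and padding of minors -/

noncomputable def concatMap {a b : ℕ} (π₁ : (Fin a → R) →ₗ[R] M) (π₂ : (Fin b → R) →ₗ[R] M) :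
    (Fin (a + b) → R) →ₗ[R] M :=
  π₁ ∘ₗ LinearMap.funLeft R R (Fin.castAdd b) + π₂ ∘ₗ LinearMap.funLeft R R (Fin.natAdd a)

lemma concatMap_apply_append {a b : ℕ} (π₁ : (Fin a → R) →ₗ[R] M) (π₂ : (Fin b → R) →ₗ[R] M)
    (u : Fin a → R) (w : Fin b → R) :
    concatMap π₁ π₂ (Fin.append u w) = π₁ u + π₂ w := by
  have h1 : (Fin.append u w ∘ Fin.castAdd b) = u := funext fun i => Fin.append_left u w i
  have h2 : (Fin.append u w ∘ Fin.natAdd a) = w := funext fun i => Fin.append_right u w i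
  show π₁ (Fin.append u w ∘ Fin.castAdd b) + π₂ (Fin.append u w ∘ Fin.natAdd a) = π₁ u + π₂ w
  rw [h1, h2]

lemma concatMap_surjective {a b : ℕ} {π₁ : (Fin a → R) →ₗ[R] M} (π₂ : (Fin b → R) →ₗ[R] M)
    (hπ₁ : Surjective π₁) : Surjective (concatMap π₁ π₂) := by
  intro x
  obtain ⟨u, rfl⟩ := hπ₁ x
  exact ⟨Fin.append u 0, by rw [concatMap_apply_append]; simp⟩

lemma minorsSpan_le_concat_right {a b k : ℕ} {π₁ : (Fin a → R) →ₗ[R] M}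
    {π₂ : (Fin b → R) →ₗ[R] M} (hπ₁ : Surjective π₁) :
    minorsSpan a k π₁ ≤ minorsSpan (a + b) (k + b) (concatMap π₁ π₂) := by
  classical
  apply minorsSpan_le
  intro v ρ hv
  set h : Fin b → Fin a → R := fun i => surjInv hπ₁ (π₂ (Pi.single i 1)) with hh
  have hlift : ∀ i, π₁ (h i) = π₂ (Pi.single i 1) := fun i => surjInv_eq hπ₁ _
  set V : Fin k ⊕ Fin b → Fin (a + b) → R :=
    Sum.elim (fun l => Fin.append (v l) 0) (fun i => Fin.append (-(h i)) (Pi.single i 1)) with hV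
  set P : Fin k ⊕ Fin b → Fin (a + b) :=
    Sum.elim (fun i => Fin.castAdd b (ρ i)) (fun i => Fin.natAdd a i) with hP
  have hrel : ∀ s, concatMap π₁ π₂ (V s) = 0 := by
    rintro (l | i)
    · show concatMap π₁ π₂ (Fin.append (v l) 0) = 0
      rw [concatMap_apply_append, hv l, map_zero, add_zero]
    · show concatMap π₁ π₂ (Fin.append (-(h i)) (Pi.single i 1)) = 0
      rw [concatMap_apply_append, map_neg, hlift i, neg_add_cancel]
  refine Ideal.subset_span ⟨fun l => V (finSumFinEquiv.symm l),
    fun i => P (finSumFinEquiv.symm i), fun l => hrel _, ?_⟩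
  have hmx : (Matrix.of fun i l => V (finSumFinEquiv.symm l) (P (finSumFinEquiv.symm i)))
      = (Matrix.fromBlocks (Matrix.of fun i l => v l (ρ i))
          (Matrix.of fun (i : Fin k) (l : Fin b) => -(h l (ρ i))) 0
          1).submatrix finSumFinEquiv.symm finSumFinEquiv.symm := by
    ext i l
    rw [Matrix.submatrix_apply, Matrix.of_apply]
    rcases hi : finSumFinEquiv.symm i with i' | i' <;> rcases hl : finSumFinEquiv.symm l with l' | l'
    · simp [hV, hP, Fin.append_left]
    · simp [hV, hP, Fin.append_left]
    · simp [hV, hP, Fin.append_right]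
    · simp [hV, hP, Fin.append_right, Matrix.one_apply, Pi.single_apply, eq_comm]
  rw [hmx, Matrix.det_submatrix_equiv_self, Matrix.det_fromBlocks_zero₂₁, Matrix.det_one, mul_one]

lemma one_mem_concat_right {a b s : ℕ} (hs : s ≤ b) {π₁ : (Fin a → R) →ₗ[R] M}
    (π₂ : (Fin b → R) →ₗ[R] M) (hπ₁ : Surjective π₁) :
    (1 : R) ∈ minorsSpan (a + b) s (concatMap π₁ π₂) := by
  classical
  set h : Fin b → Fin a → R := fun i => surjInv hπ₁ (π₂ (Pi.single i 1)) with hh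
  have hlift : ∀ i, π₁ (h i) = π₂ (Pi.single i 1) := fun i => surjInv_eq hπ₁ _
  set w : Fin b → Fin (a + b) → R := fun i => Fin.append (-(h i)) (Pi.single i 1) with hw
  have hrel : ∀ i, concatMap π₁ π₂ (w i) = 0 := by
    intro i
    show concatMap π₁ π₂ (Fin.append (-(h i)) (Pi.single i 1)) = 0
    rw [concatMap_apply_append, map_neg, hlift i, neg_add_cancel]
  refine Ideal.subset_span ⟨fun l => w (Fin.castLE hs l),
    fun i => Fin.natAdd a (Fin.castLE hs i), fun l => hrel _, ?_⟩
  have hmx : (Matrix.of fun i l => w (Fin.castLE hs l) (Fin.natAdd a (Fin.castLE hs i)))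
      = (1 : Matrix (Fin s) (Fin s) R) := by
    ext i l
    rw [Matrix.of_apply]
    show Fin.append (-(h _)) (Pi.single (Fin.castLE hs l) 1) (Fin.natAdd a (Fin.castLE hs i))
      = (1 : Matrix (Fin s) (Fin s) R) i l
    rw [Fin.append_right, Pi.single_apply, Matrix.one_apply]
    simp [Fin.castLE_inj, eq_comm]
  rw [hmx, Matrix.det_one]

lemma minorsSpan_le_concat_left {a b k : ℕ} (π₁ : (Fin a → R) →ₗ[R] M)
    {π₂ : (Fin b → R) →ₗ[R] M} (hπ₂ : Surjective π₂) :
    minorsSpan b k π₂ ≤ minorsSpan (a + b) (a + k) (concatMap π₁ π₂) := by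
  classical
  apply minorsSpan_le
  intro v ρ hv
  set h : Fin a → Fin b → R := fun i => surjInv hπ₂ (π₁ (Pi.single i 1)) with hh
  have hlift : ∀ i, π₂ (h i) = π₁ (Pi.single i 1) := fun i => surjInv_eq hπ₂ _
  set V : Fin a ⊕ Fin k → Fin (a + b) → R :=
    Sum.elim (fun i => Fin.append (Pi.single i 1) (-(h i))) (fun l => Fin.append 0 (v l)) with hV
  set P : Fin a ⊕ Fin k → Fin (a + b) :=
    Sum.elim (fun i => Fin.castAdd b i) (fun i => Fin.natAdd a (ρ i)) with hP
  have hrel : ∀ s, concatMap π₁ π₂ (V s) = 0 := by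
    rintro (i | l)
    · show concatMap π₁ π₂ (Fin.append (Pi.single i 1) (-(h i))) = 0
      rw [concatMap_apply_append, map_neg, hlift i, add_neg_cancel]
    · show concatMap π₁ π₂ (Fin.append 0 (v l)) = 0
      rw [concatMap_apply_append, hv l, map_zero, zero_add]
  refine Ideal.subset_span ⟨fun l => V (finSumFinEquiv.symm l),
    fun i => P (finSumFinEquiv.symm i), fun l => hrel _, ?_⟩
  have hmx : (Matrix.of fun i l => V (finSumFinEquiv.symm l) (P (finSumFinEquiv.symm i)))
      = (Matrix.fromBlocks 1 0
          (Matrix.of fun (i : Fin k) (l : Fin a) => -(h l (ρ i)))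
          (Matrix.of fun i l => v l (ρ i))).submatrix finSumFinEquiv.symm finSumFinEquiv.symm := by
    ext i l
    rw [Matrix.submatrix_apply, Matrix.of_apply]
    rcases hi : finSumFinEquiv.symm i with i' | i' <;> rcases hl : finSumFinEquiv.symm l with l' | l'
    · simp [hV, hP, Fin.append_left, Matrix.one_apply, Pi.single_apply, eq_comm]
    · simp [hV, hP, Fin.append_left]
    · simp [hV, hP, Fin.append_right]
    · simp [hV, hP, Fin.append_right]
  rw [hmx, Matrix.det_submatrix_equiv_self, Matrix.det_fromBlocks_zero₁₂, Matrix.det_one, one_mul]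

lemma one_mem_concat_left {a b s : ℕ} (hs : s ≤ a) (π₁ : (Fin a → R) →ₗ[R] M)
    {π₂ : (Fin b → R) →ₗ[R] M} (hπ₂ : Surjective π₂) :
    (1 : R) ∈ minorsSpan (a + b) s (concatMap π₁ π₂) := by
  classical
  set h : Fin a → Fin b → R := fun i => surjInv hπ₂ (π₁ (Pi.single i 1)) with hh
  have hlift : ∀ i, π₂ (h i) = π₁ (Pi.single i 1) := fun i => surjInv_eq hπ₂ _
  set w : Fin a → Fin (a + b) → R := fun i => Fin.append (Pi.single i 1) (-(h i)) with hw
  have hrel : ∀ i, concatMap π₁ π₂ (w i) = 0 := by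
    intro i
    show concatMap π₁ π₂ (Fin.append (Pi.single i 1) (-(h i))) = 0
    rw [concatMap_apply_append, map_neg, hlift i, add_neg_cancel]
  refine Ideal.subset_span ⟨fun l => w (Fin.castLE hs l),
    fun i => Fin.castAdd b (Fin.castLE hs i), fun l => hrel _, ?_⟩
  have hmx : (Matrix.of fun i l => w (Fin.castLE hs l) (Fin.castAdd b (Fin.castLE hs i)))
      = (1 : Matrix (Fin s) (Fin s) R) := by
    ext i l
    rw [Matrix.of_apply]
    show Fin.append (Pi.single (Fin.castLE hs l) 1) (-(h _)) (Fin.castAdd b (Fin.castLE hs i))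
      = (1 : Matrix (Fin s) (Fin s) R) i l
    rw [Fin.append_left, Pi.single_apply, Matrix.one_apply]
    simp [Fin.castLE_inj, eq_comm]
  rw [hmx, Matrix.det_one]

lemma minorsSpan_sub_le_concat_right {a b j : ℕ} {π₁ : (Fin a → R) →ₗ[R] M}
    {π₂ : (Fin b → R) →ₗ[R] M} (hπ₁ : Surjective π₁) :
    minorsSpan a (a - j) π₁ ≤ minorsSpan (a + b) ((a + b) - j) (concatMap π₁ π₂) := by
  rcases le_or_gt j a with hja | hja
  · have hsz : (a + b) - j = (a - j) + b := by omega
    rw [hsz]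
    exact minorsSpan_le_concat_right hπ₁
  · apply minorsSpan_le
    intro v ρ hv
    haveI he : IsEmpty (Fin (a - j)) := by
      rw [show a - j = 0 by omega]; infer_instance
    rw [Matrix.det_isEmpty]
    exact one_mem_concat_right (by omega) π₂ hπ₁

lemma minorsSpan_sub_le_concat_left {a b j : ℕ} {π₁ : (Fin a → R) →ₗ[R] M}
    {π₂ : (Fin b → R) →ₗ[R] M} (hπ₂ : Surjective π₂) :
    minorsSpan b (b - j) π₂ ≤ minorsSpan (a + b) ((a + b) - j) (concatMap π₁ π₂) := by
  rcases le_or_gt j b with hjb | hjb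
  · have hsz : (a + b) - j = a + (b - j) := by omega
    rw [hsz]
    exact minorsSpan_le_concat_left π₁ hπ₂
  · apply minorsSpan_le
    intro v ρ hv
    haveI he : IsEmpty (Fin (b - j)) := by
      rw [show b - j = 0 by omega]; infer_instance
    rw [Matrix.det_isEmpty]
    exact one_mem_concat_left (by omega) π₁ hπ₂

lemma exists_minorsSpan_eq_top [Module.Finite R M] {r : ℕ} (h2 : fittingIdeal R M r = ⊤) :
    ∃ (n : ℕ) (π : (Fin n → R) →ₗ[R] M), Surjective π ∧ minorsSpan n (n - r) π = ⊤ := by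
  classical
  let ι := Σ n : ℕ, {π : (Fin n → R) →ₗ[R] M // Surjective π}
  haveI hne : Nonempty ι := by
    obtain ⟨n, f, hf⟩ := Module.Finite.exists_fin' R M
    exact ⟨⟨n, f, hf⟩⟩
  let F : ι → Ideal R := fun q => minorsSpan q.1 (q.1 - r) q.2.1
  have hdir : Directed (· ≤ ·) F := by
    rintro ⟨a, π₁, h₁⟩ ⟨b, π₂, h₂⟩
    exact ⟨⟨a + b, concatMap π₁ π₂, concatMap_surjective π₂ h₁⟩,
      minorsSpan_sub_le_concat_right h₁, minorsSpan_sub_le_concat_left h₂⟩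
  have heq : fittingIdeal R M r = ⨆ q, F q := by
    apply le_antisymm
    · exact fittingIdeal_le fun n π hπ => le_iSup F ⟨n, π, hπ⟩
    · exact iSup_le fun q => minorsSpan_le_fittingIdeal q.2.2 r
  have h1 : (1 : R) ∈ ⨆ q, F q := by
    rw [← heq, h2]; trivial
  obtain ⟨⟨n, π, hπ⟩, hq⟩ := (Submodule.mem_iSup_of_directed F hdir).mp h1
  exact ⟨n, π, hπ, Ideal.eq_top_of_isUnit_mem _ hq isUnit_one⟩

/-! ### Localized presentations -/

noncomputable def locMap (S : Submonoid R) {n : ℕ} (π : (Fin n → R) →ₗ[R] M) :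
    (Fin n → Localization S) →ₗ[Localization S] LocalizedModule S M :=
  Fintype.linearCombination (Localization S)
    (fun i => LocalizedModule.mk (π (Pi.single i 1)) 1)

lemma locMap_single (S : Submonoid R) {n : ℕ} (π : (Fin n → R) →ₗ[R] M)
    (i : Fin n) (a : Localization S) :
    locMap S π (Pi.single i a) = a • LocalizedModule.mk (π (Pi.single i 1)) 1 := by
  classical
  rw [locMap, Fintype.linearCombination_apply_single]

lemma locMap_algebraMap (S : Submonoid R) {n : ℕ} (π : (Fin n → R) →ₗ[R] M) (v : Fin n → R) :
    locMap S π (fun i => algebraMap R (Localization S) (v i)) =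
      LocalizedModule.mk (π v) 1 := by
  classical
  rw [locMap, Fintype.linearCombination_apply]
  have h2 : ∀ i : Fin n, algebraMap R (Localization S) (v i) •
        LocalizedModule.mk (π (Pi.single i 1)) (1 : S)
      = LocalizedModule.mk (π (Pi.single i (v i))) 1 := by
    intro i
    rw [algebraMap_smul, LocalizedModule.smul'_mk, ← π.map_smul (v i) (Pi.single i 1)]
    congr 2
    funext j
    by_cases hj : j = i
    · subst hj; simp
    · simp [Pi.single_eq_of_ne hj]
  rw [Finset.sum_congr rfl fun i _ => h2 i]
  have h4 : (∑ i, Pi.single i (v i) : Fin n → R) = v := Finset.univ_sum_single v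
  have h5 := map_sum (LocalizedModule.mkLinearMap S M ∘ₗ π)
    (fun i => (Pi.single i (v i) : Fin n → R)) Finset.univ
  simpa [h4] using h5.symm

lemma locMap_surjective (S : Submonoid R) {n : ℕ} {π : (Fin n → R) →ₗ[R] M}
    (hπ : Surjective π) : Surjective (locMap S π) := by
  intro y
  refine LocalizedModule.induction_on ?_ y
  intro m s
  obtain ⟨v, rfl⟩ := hπ m
  refine ⟨Localization.mk 1 s • fun i => algebraMap R (Localization S) (v i), ?_⟩
  rw [_root_.map_smul, locMap_algebraMap, LocalizedModule.mk_smul_mk]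
  simp

lemma locMap_eq_zero (S : Submonoid R) {n : ℕ} (π : (Fin n → R) →ₗ[R] M)
    {w : Fin n → Localization S} (hw : locMap S π w = 0) :
    ∃ (u : S) (v : Fin n → R), π v = 0 ∧
      ∀ i, algebraMap R (Localization S) (u : R) * w i
        = algebraMap R (Localization S) (v i) := by
  classical
  obtain ⟨b, hb⟩ := IsLocalization.exist_integer_multiples S Finset.univ w
  have hb' : ∀ i, ∃ r : R, algebraMap R (Localization S) r = b • w i :=
    fun i => hb i (Finset.mem_univ i)
  choose a ha using hb'
  have h0 : LocalizedModule.mk (π a) (1 : S) = 0 := by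
    have hfa : (fun i => algebraMap R (Localization S) (a i)) = (b : R) • w := by
      funext i
      rw [ha i, Submonoid.smul_def, Pi.smul_apply, Algebra.smul_def]
    rw [← locMap_algebraMap S π a, hfa]
    have : ((b : R) • w) = (algebraMap R (Localization S) (b : R)) • w := by
      funext i
      rw [Pi.smul_apply, Pi.smul_apply, Algebra.smul_def, smul_eq_mul]
    rw [this, _root_.map_smul, hw, smul_zero]
  have h1 : ∃ t : S, t • (π a) = 0 := by
    rw [show (0 : LocalizedModule S M) = LocalizedModule.mk 0 1 from
      (LocalizedModule.zero_mk 1).symm, LocalizedModule.mk_eq] at h0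
    obtain ⟨t, ht⟩ := h0
    exact ⟨t, by simpa using ht⟩
  obtain ⟨t, ht⟩ := h1
  refine ⟨t * b, (t : R) • a, ?_, ?_⟩
  · rw [_root_.map_smul, ← Submonoid.smul_def, ht]
  · intro i
    have hbw : algebraMap R (Localization S) (b : R) * w i
        = algebraMap R (Localization S) (a i) := by
      rw [ha i, Submonoid.smul_def, Algebra.smul_def]
    rw [Submonoid.coe_mul, _root_.map_mul, mul_assoc, hbw, ← _root_.map_mul]
    congr 1

/-! ### Determinant helpers -/

lemma isUnit_prod_coe (S : Submonoid R) {m : ℕ} (u : Fin m → S) :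
    IsUnit (∏ l, algebraMap R (Localization S) ((u l : R))) := by
  rw [← map_prod, ← Submonoid.coe_finset_prod]
  exact IsLocalization.map_units _ _

lemma loc_det_eq_zero (S : Submonoid R) {n j m : ℕ} {π : (Fin n → R) →ₗ[R] M}
    (hπ : Surjective π) (hj : fittingIdeal R M j = ⊥) (hm : m = n - j)
    (w : Fin m → Fin n → Localization S) (hw : ∀ l, locMap S π (w l) = 0)
    (ρ : Fin m → Fin n) :
    Matrix.det (Matrix.of fun i l => w l (ρ i)) = 0 := by
  classical
  choose u v hv hve using fun l => locMap_eq_zero S π (hw l)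
  have hdet0 : Matrix.det (Matrix.of fun i l =>
      algebraMap R (Localization S) (v l (ρ i))) = 0 := by
    have h1 : (Matrix.of fun i l => algebraMap R (Localization S) (v l (ρ i)))
        = (algebraMap R (Localization S)).mapMatrix (Matrix.of fun i l => v l (ρ i)) := rfl
    have hmem : Matrix.det (Matrix.of fun i l => v l (ρ i)) ∈ fittingIdeal R M j :=
      det_mem_fittingIdeal' hπ hm v ρ hv
    rw [hj, Ideal.mem_bot] at hmem
    rw [h1, ← RingHom.map_det, hmem, map_zero]
  have hscale : (Matrix.of fun i l => algebraMap R (Localization S) ((u l : R)) * w l (ρ i))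
      = (Matrix.of fun i l => algebraMap R (Localization S) (v l (ρ i))) := by
    ext i l
    exact hve l (ρ i)
  have h3 : Matrix.det (Matrix.of fun i l =>
        algebraMap R (Localization S) ((u l : R)) * w l (ρ i))
      = (∏ l, algebraMap R (Localization S) ((u l : R))) *
        Matrix.det (Matrix.of fun i l => w l (ρ i)) :=
    Matrix.det_mul_row _ _
  have h5 : (∏ l, algebraMap R (Localization S) ((u l : R))) *
      Matrix.det (Matrix.of fun i l => w l (ρ i)) = 0 := by
    rw [← h3, hscale, hdet0]
  exact ((isUnit_prod_coe S u).mul_right_eq_zero).mp h5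

lemma exists_unit_det (S : Submonoid R) {n r m : ℕ} {π : (Fin n → R) →ₗ[R] M}
    (hπ : Surjective π) (hm : m = n - r)
    (w : Fin m → Fin n → Localization S) (hw : ∀ l, locMap S π (w l) = 0)
    (ρ : Fin m → Fin n)
    (hu : IsUnit (Matrix.det (Matrix.of fun i l => w l (ρ i)))) :
    ∃ d ∈ fittingIdeal R M r, IsUnit (algebraMap R (Localization S) d) := by
  classical
  choose u v hv hve using fun l => locMap_eq_zero S π (hw l)
  refine ⟨Matrix.det (Matrix.of fun i l => v l (ρ i)),
    det_mem_fittingIdeal' hπ hm v ρ hv, ?_⟩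
  have hscale : (Matrix.of fun i l => algebraMap R (Localization S) ((u l : R)) * w l (ρ i))
      = (Matrix.of fun i l => algebraMap R (Localization S) (v l (ρ i))) := by
    ext i l
    exact hve l (ρ i)
  have h3 : Matrix.det (Matrix.of fun i l =>
        algebraMap R (Localization S) ((u l : R)) * w l (ρ i))
      = (∏ l, algebraMap R (Localization S) ((u l : R))) *
        Matrix.det (Matrix.of fun i l => w l (ρ i)) :=
    Matrix.det_mul_row _ _
  have e1 : (algebraMap R (Localization S)).mapMatrix (Matrix.of fun i l => v l (ρ i))
      = (Matrix.of fun i l => algebraMap R (Localization S) (v l (ρ i))) := rfl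
  rw [RingHom.map_det, e1, ← hscale, h3]
  exact (isUnit_prod_coe S u).mul hu

universe uK in
lemma det_snoc_struct {K : Type uK} [CommRing K] {n k : ℕ} (v : Fin k → Fin n → K)
    (w : Fin n → K) (ρ : Fin k → Fin n) (s : Fin n) (hw0 : ∀ i, w (ρ i) = 0) :
    Matrix.det (Matrix.of fun i l => (Fin.snoc v w : Fin (k + 1) → Fin n → K) l
        ((Fin.snoc ρ s : Fin (k + 1) → Fin n) i))
      = w s * Matrix.det (Matrix.of fun i l => v l (ρ i)) := by
  classical
  set AA : Matrix (Fin (k + 1)) (Fin (k + 1)) K :=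
    Matrix.of fun i l => (Fin.snoc v w : Fin (k + 1) → Fin n → K) l
      ((Fin.snoc ρ s : Fin (k + 1) → Fin n) i) with hAA
  rw [show Matrix.det AA = _ from Matrix.det_succ_column AA (Fin.last k)]
  rw [Finset.sum_eq_single (Fin.last k)]
  · have h1 : AA (Fin.last k) (Fin.last k) = w s := by
      simp [hAA, Fin.snoc_last]
    have h2 : AA.submatrix (Fin.last k).succAbove (Fin.last k).succAbove
        = Matrix.of fun i l => v l (ρ i) := by
      ext i' l'
      simp [hAA, Fin.succAbove_last, Fin.snoc_castSucc]
    rw [h1, h2, Fin.val_last]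
    rw [show ((-1 : K) ^ (k + k)) = 1 from Even.neg_one_pow ⟨k, by ring⟩]
    ring
  · intro i _ hi
    obtain ⟨i', rfl⟩ := Fin.eq_castSucc_of_ne_last hi
    have hz : AA (Fin.castSucc i') (Fin.last k) = 0 := by
      simp [hAA, Fin.snoc_last, Fin.snoc_castSucc, hw0]
    rw [hz]
    ring
  · intro h
    exact absurd (Finset.mem_univ _) h

universe uK in
lemma det_factor_eq_zero {K : Type uK} [CommRing K] {m k : ℕ} (h : m = k + 1)
    (P : Matrix (Fin m) (Fin k) K) (C : Matrix (Fin k) (Fin m) K) :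
    (P * C).det = 0 := by
  classical
  subst h
  set P' : Matrix (Fin (k + 1)) (Fin (k + 1)) K :=
    Matrix.of fun i j => Fin.lastCases 0 (fun j' => P i j') j with hP'
  set C' : Matrix (Fin (k + 1)) (Fin (k + 1)) K :=
    Matrix.of fun i j => Fin.lastCases 0 (fun i' => C i' j) i with hC'
  have hPC : P * C = P' * C' := by
    ext i j
    rw [Matrix.mul_apply, Matrix.mul_apply, Fin.sum_univ_castSucc]
    simp [hP', hC']
  have hC0 : C'.det = 0 := by
    apply Matrix.det_eq_zero_of_row_eq_zero (Fin.last k)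
    intro j
    simp [hC']
  rw [hPC, Matrix.det_mul, hC0, mul_zero]

/-! ### Backward direction: local freeness -/

lemma free_localized_of_fitting [Module.Finite R M] [Nontrivial R] {r : ℕ}
    (h0 : 1 ≤ r → fittingIdeal R M (r - 1) = ⊥) (h2 : fittingIdeal R M r = ⊤)
    (p : Ideal R) [hp : p.IsPrime] :
    Module.Free (Localization.AtPrime p) (LocalizedModule p.primeCompl M) ∧
      Module.finrank (Localization.AtPrime p) (LocalizedModule p.primeCompl M) = r := by
  classical
  have hdata : ∃ (n : ℕ) (π : (Fin n → R) →ₗ[R] M) (v : Fin (n - r) → Fin n → R)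
      (ρ : Fin (n - r) → Fin n), Surjective π ∧ (∀ l, π (v l) = 0) ∧
      Matrix.det (Matrix.of fun i l => v l (ρ i)) ∉ p := by
    by_contra hc
    push_neg at hc
    have hle : fittingIdeal R M r ≤ p := fittingIdeal_le fun n π hπ =>
      minorsSpan_le fun v ρ hv => hc n π v ρ hπ hv
    rw [h2] at hle
    exact hp.ne_top (top_le_iff.mp hle)
  obtain ⟨n, π, v, ρ, hπ, hrel, hdp⟩ := hdata
  have hrn : r ≤ n := by
    by_contra hlt
    push_neg at hlt
    have h0' := h0 (by omega)
    haveI he : IsEmpty (Fin (n - (r - 1))) := by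
      rw [show n - (r - 1) = 0 by omega]; infer_instance
    have h1 : (1 : R) ∈ fittingIdeal R M (r - 1) := by
      apply minorsSpan_le_fittingIdeal hπ
      exact Ideal.subset_span ⟨isEmptyElim, isEmptyElim, fun l => isEmptyElim l,
        Matrix.det_isEmpty.symm⟩
    rw [h0', Ideal.mem_bot] at h1
    exact one_ne_zero h1
  set A := Localization.AtPrime p with hA
  set DA : Matrix (Fin (n - r)) (Fin (n - r)) A :=
    (algebraMap R A).mapMatrix (Matrix.of fun i l => v l (ρ i)) with hDA
  have hDAdet : IsUnit DA.det := by
    rw [hDA, ← RingHom.map_det]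
    exact IsLocalization.map_units A (⟨_, hdp⟩ : p.primeCompl)
  have hρinj : Injective ρ := by
    intro i i' hii
    by_contra hne
    have hz : Matrix.det (Matrix.of fun i l => v l (ρ i)) = 0 :=
      Matrix.det_zero_of_row_eq hne (by funext l; simp [hii])
    exact hdp (hz ▸ p.zero_mem)
  have hcard : Fintype.card {t : Fin n // t ∉ Set.range ρ} = r := by
    have h1 : Fintype.card {t : Fin n // t ∈ Set.range ρ} = (n - r) := by
      have := Set.card_range_of_injective hρinj
      rw [Fintype.card_fin] at this
      exact this
    rw [Fintype.card_subtype_compl, Fintype.card_fin, h1]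
    omega
  let φe : Fin r ≃ {t : Fin n // t ∉ Set.range ρ} := (Fintype.equivFinOfCardEq hcard).symm
  let τ : Fin r → Fin n := fun j => (φe j : Fin n)
  have hτr : ∀ j, τ j ∉ Set.range ρ := fun j => (φe j).2
  have hτinj : Injective τ := fun a b hab => φe.injective (Subtype.ext hab)
  have hτsurj : ∀ t : Fin n, t ∉ Set.range ρ → ∃ j, τ j = t := fun t ht =>
    ⟨φe.symm ⟨t, ht⟩, by simp [τ]⟩
  set πS := locMap p.primeCompl π with hπS
  set vA : Fin (n - r) → Fin n → A := fun l t => algebraMap R A (v l t) with hvA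
  have hvAS : ∀ l, πS (vA l) = 0 := by
    intro l
    have h1 : πS (vA l) = LocalizedModule.mk (π (v l)) 1 := locMap_algebraMap _ π (v l)
    rw [h1, hrel l, LocalizedModule.zero_mk]
  have hDA1 : DA * DA⁻¹ = 1 := Matrix.mul_nonsing_inv DA hDAdet
  set v'' : Fin (n - r) → Fin n → A := fun i => ∑ l, DA⁻¹ l i • vA l with hv''
  have hv''S : ∀ i, πS (v'' i) = 0 := by
    intro i
    rw [hv'', map_sum]
    refine Finset.sum_eq_zero fun l _ => ?_
    rw [_root_.map_smul, hvAS l, smul_zero]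
  have hv''δ : ∀ i i', v'' i (ρ i') = if i' = i then 1 else 0 := by
    intro i i'
    have h1 : v'' i (ρ i') = ∑ l, DA⁻¹ l i * vA l (ρ i') := by
      rw [hv'']
      simp [Finset.sum_apply]
    have h2 : (∑ l, DA⁻¹ l i * vA l (ρ i')) = (DA * DA⁻¹) i' i := by
      rw [Matrix.mul_apply]
      exact Finset.sum_congr rfl fun l _ => by rw [mul_comm]; rfl
    rw [h1, h2, hDA1, Matrix.one_apply]
  set b : Fin r → LocalizedModule p.primeCompl M := fun j => πS (Pi.single (τ j) 1) with hb
  have hspan : ∀ w : Fin n → A, πS w ∈ Submodule.span A (Set.range b) := by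
    intro w
    set red : Fin n → A := w - ∑ i, w (ρ i) • v'' i with hredd
    have hπred : πS red = πS w := by
      rw [hredd, map_sub, map_sum]
      rw [Finset.sum_congr rfl fun i (_ : i ∈ Finset.univ) => by
        rw [_root_.map_smul, hv''S i, smul_zero]]
      simp
    have hred0 : ∀ i', red (ρ i') = 0 := by
      intro i'
      rw [hredd]
      simp only [Pi.sub_apply, Finset.sum_apply, Pi.smul_apply, smul_eq_mul]
      rw [Finset.sum_congr rfl fun i (_ : i ∈ Finset.univ) => by rw [hv''δ i i']]
      simp [Finset.sum_ite_eq]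
    have hexp : red = ∑ j, red (τ j) • Pi.single (τ j) (1 : A) := by
      funext t
      by_cases ht : t ∈ Set.range ρ
      · obtain ⟨i', rfl⟩ := ht
        rw [hred0 i']
        symm
        simp only [Finset.sum_apply, Pi.smul_apply, smul_eq_mul]
        refine Finset.sum_eq_zero fun j _ => ?_
        rw [Pi.single_eq_of_ne (fun he => hτr j ⟨i', he⟩), mul_zero]
      · obtain ⟨j₀, rfl⟩ := hτsurj t ht
        symm
        simp only [Finset.sum_apply, Pi.smul_apply, smul_eq_mul]
        rw [Finset.sum_eq_single j₀]
        · rw [Pi.single_eq_same, mul_one]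
        · intro j _ hj
          rw [Pi.single_eq_of_ne fun he => hj (hτinj he).symm, mul_zero]
        · intro hmem
          exact absurd (Finset.mem_univ j₀) hmem
    rw [← hπred, hexp, map_sum]
    refine Submodule.sum_mem _ fun j _ => ?_
    rw [_root_.map_smul]
    exact Submodule.smul_mem _ _ (Submodule.subset_span ⟨j, rfl⟩)
  have hli : LinearIndependent A b := by
    rw [Fintype.linearIndependent_iff]
    intro g hg j₀
    have hr1 : 1 ≤ r := j₀.pos
    set w : Fin n → A := ∑ j, g j • Pi.single (τ j) (1 : A) with hw
    have hwS : πS w = 0 := by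
      rw [hw, map_sum]
      have he1 : (∑ j, πS (g j • Pi.single (τ j) (1 : A))) = ∑ j, g j • b j :=
        Finset.sum_congr rfl fun j _ => by rw [_root_.map_smul]
      rw [he1, hg]
    have hwρ : ∀ i', w (ρ i') = 0 := by
      intro i'
      rw [hw]
      simp only [Finset.sum_apply, Pi.smul_apply, smul_eq_mul]
      refine Finset.sum_eq_zero fun j _ => ?_
      rw [Pi.single_eq_of_ne (fun he => hτr j ⟨i', he⟩), mul_zero]
    have hwτ : w (τ j₀) = g j₀ := by
      rw [hw]
      simp only [Finset.sum_apply, Pi.smul_apply, smul_eq_mul]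
      rw [Finset.sum_eq_single j₀]
      · rw [Pi.single_eq_same, mul_one]
      · intro j _ hj
        rw [Pi.single_eq_of_ne fun he => hj (hτinj he).symm, mul_zero]
      · intro hmem
        exact absurd (Finset.mem_univ j₀) hmem
    have hrels : ∀ l, πS ((Fin.snoc vA w : Fin ((n - r) + 1) → Fin n → A) l) = 0 := by
      intro l
      refine Fin.lastCases ?_ ?_ l
      · rw [Fin.snoc_last]
        exact hwS
      · intro l'
        rw [Fin.snoc_castSucc]
        exact hvAS l'
    have hdet := loc_det_eq_zero p.primeCompl hπ (h0 hr1)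
      (show (n - r) + 1 = n - (r - 1) by omega) (Fin.snoc vA w) hrels (Fin.snoc ρ (τ j₀))
    have hdetval := det_snoc_struct vA w ρ (τ j₀) hwρ
    rw [hdet] at hdetval
    have hDAd : Matrix.det (Matrix.of fun i l => vA l (ρ i)) = DA.det := rfl
    rw [hDAd, hwτ] at hdetval
    exact (hDAdet.mul_left_eq_zero).mp hdetval.symm
  let B : Module.Basis (Fin r) A (LocalizedModule p.primeCompl M) := Module.Basis.mk hli (by
    intro y _
    obtain ⟨w, rfl⟩ := locMap_surjective p.primeCompl hπ y
    exact hspan w)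
  refine ⟨Module.Free.of_basis B, ?_⟩
  rw [Module.finrank_eq_card_basis B, Fintype.card_fin]

/-! ### Backward direction: finite presentation -/

lemma finitePresentation_of_fitting [Module.Finite R M] [Nontrivial R] {r : ℕ}
    (h0 : 1 ≤ r → fittingIdeal R M (r - 1) = ⊥) (h2 : fittingIdeal R M r = ⊤) :
    Module.FinitePresentation R M := by
  classical
  obtain ⟨n, π, hπ, htop⟩ := exists_minorsSpan_eq_top h2
  have hrn : r ≤ n := by
    by_contra hlt
    push_neg at hlt
    have h0' := h0 (by omega)
    haveI he : IsEmpty (Fin (n - (r - 1))) := by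
      rw [show n - (r - 1) = 0 by omega]; infer_instance
    have h1 : (1 : R) ∈ fittingIdeal R M (r - 1) := by
      apply minorsSpan_le_fittingIdeal hπ
      exact Ideal.subset_span ⟨isEmptyElim, isEmptyElim, fun l => isEmptyElim l,
        Matrix.det_isEmpty.symm⟩
    rw [h0', Ideal.mem_bot] at h1
    exact one_ne_zero h1
  have h1mem : (1 : R) ∈ Ideal.span {x : R | ∃ (v : Fin (n - r) → Fin n → R)
      (ρ : Fin (n - r) → Fin n), (∀ l, π (v l) = 0) ∧
      x = Matrix.det (Matrix.of fun i l => v l (ρ i))} := by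
    rw [show Ideal.span _ = minorsSpan n (n - r) π from rfl, htop]
    trivial
  obtain ⟨T, hTsub, hTspan⟩ := Submodule.mem_span_finite_of_mem_span h1mem
  have hdataT : ∀ x : {x : R // x ∈ T}, ∃ (v : Fin (n - r) → Fin n → R)
      (ρ : Fin (n - r) → Fin n),
      (∀ l, π (v l) = 0) ∧ (x : R) = Matrix.det (Matrix.of fun i l => v l (ρ i)) :=
    fun x => hTsub x.2
  choose V P hVrel hVdet using hdataT
  set G : Set (Fin n → R) := ⋃ x : {x : R // x ∈ T}, Set.range (V x) with hG
  have hGfin : G.Finite := Set.finite_iUnion (fun x => Set.finite_range (V x))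
  set N : Submodule R (Fin n → R) := Submodule.span R G with hN
  have hNfg : N.FG := (Submodule.fg_def).mpr ⟨G, hGfin, rfl⟩
  have hNker : N ≤ LinearMap.ker π := by
    rw [hN, Submodule.span_le]
    rintro g hg
    simp only [hG, Set.mem_iUnion] at hg
    obtain ⟨x, l, rfl⟩ := hg
    exact LinearMap.mem_ker.mpr (hVrel x l)
  have hker : LinearMap.ker π ≤ N := by
    intro w hw
    set Q : Ideal R := Submodule.comap (LinearMap.toSpanSingleton R (Fin n → R) w) N with hQ
    have hQtop : Q = ⊤ := by
      by_contra hne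
      obtain ⟨m, hm, hle⟩ := Ideal.exists_le_maximal Q hne
      have hTm : ∃ x ∈ T, x ∉ m := by
        by_contra hc
        push_neg at hc
        have hsp : Ideal.span (T : Set R) ≤ m := Ideal.span_le.mpr hc
        exact hm.ne_top ((Ideal.eq_top_iff_one m).mpr (hsp hTspan))
      obtain ⟨d0, hdT, hdm⟩ := hTm
      set d : {x : R // x ∈ T} := ⟨d0, hdT⟩ with hd0
      set D : Matrix (Fin (n - r)) (Fin (n - r)) R :=
        Matrix.of fun i l => V d l (P d i) with hD
      have hdet : d0 = D.det := hVdet d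
      have hdetm : D.det ∉ m := fun hmm => hdm (hdet ▸ hmm)
      set v' : Fin (n - r) → Fin n → R := fun i => ∑ l, D.adjugate l i • V d l with hv'
      have hv'N : ∀ i, v' i ∈ N := by
        intro i
        refine Submodule.sum_mem _ fun l _ => Submodule.smul_mem _ _ ?_
        exact Submodule.subset_span (Set.mem_iUnion.mpr ⟨d, ⟨l, rfl⟩⟩)
      have hv'rel : ∀ i, π (v' i) = 0 := by
        intro i
        rw [hv', map_sum]
        refine Finset.sum_eq_zero fun l _ => ?_
        rw [_root_.map_smul, hVrel d l, smul_zero]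
      have hv'δ : ∀ i i', v' i (P d i') = if i' = i then D.det else 0 := by
        intro i i'
        have ha : v' i (P d i') = ∑ l, D.adjugate l i * V d l (P d i') := by
          rw [hv']
          simp [Finset.sum_apply]
        have hb' : (∑ l, D.adjugate l i * V d l (P d i')) = (D * D.adjugate) i' i := by
          rw [Matrix.mul_apply]
          exact Finset.sum_congr rfl fun l _ => by rw [mul_comm]; rfl
        rw [ha, hb', Matrix.mul_adjugate]
        simp [Matrix.one_apply]
      set red : Fin n → R := D.det • w - ∑ i, w (P d i) • v' i with hredd
      have hredker : red ∈ LinearMap.ker π := by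
        rw [hredd]
        refine Submodule.sub_mem _ (Submodule.smul_mem _ _ hw) ?_
        exact Submodule.sum_mem _ fun i _ => Submodule.smul_mem _ _
          (LinearMap.mem_ker.mpr (hv'rel i))
      have hred0 : ∀ i', red (P d i') = 0 := by
        intro i'
        rw [hredd]
        simp only [Pi.sub_apply, Pi.smul_apply, smul_eq_mul, Finset.sum_apply]
        rw [Finset.sum_congr rfl fun i (_ : i ∈ Finset.univ) => by
          rw [hv'δ i i', mul_ite, mul_zero]]
        rw [Finset.sum_ite_eq]
        simp [mul_comm]
      have hdred : D.det • red = 0 := by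
        funext t
        by_cases ht : t ∈ Set.range (P d)
        · obtain ⟨i', rfl⟩ := ht
          show D.det • red (P d i') = 0
          rw [hred0 i', smul_zero]
        · have hPinj : Injective (P d) := by
            intro i i' hii
            by_contra hne2
            have hz : D.det = 0 := Matrix.det_zero_of_row_eq hne2 (by funext l; simp [hD, hii])
            exact hdetm (hz ▸ m.zero_mem)
          rcases Nat.eq_zero_or_pos r with hr0 | hrpos
          · exfalso
            have hcards : Fintype.card {t : Fin n // t ∉ Set.range (P d)} = r := by
              have hc1 : Fintype.card {t : Fin n // t ∈ Set.range (P d)} = (n - r) := by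
                have := Set.card_range_of_injective hPinj
                rw [Fintype.card_fin] at this
                exact this
              rw [Fintype.card_subtype_compl, Fintype.card_fin, hc1]
              omega
            haveI := Fintype.card_eq_zero_iff.mp (show Fintype.card
              {t : Fin n // t ∉ Set.range (P d)} = 0 by omega)
            exact (IsEmpty.false (⟨t, ht⟩ : {t : Fin n // t ∉ Set.range (P d)}))
          · have h0' := h0 hrpos
            have hrels : ∀ l, π ((Fin.snoc (V d) red : Fin ((n - r) + 1) → Fin n → R) l) = 0 := by
              intro l
              refine Fin.lastCases ?_ ?_ l
              · rw [Fin.snoc_last]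
                exact LinearMap.mem_ker.mp hredker
              · intro l'
                rw [Fin.snoc_castSucc]
                exact hVrel d l'
            have hmem : Matrix.det (Matrix.of fun i l =>
                (Fin.snoc (V d) red : Fin ((n - r) + 1) → Fin n → R) l
                  ((Fin.snoc (P d) t : Fin ((n - r) + 1) → Fin n) i))
                ∈ fittingIdeal R M (r - 1) :=
              det_mem_fittingIdeal' hπ (by omega) _ _ hrels
            rw [h0', Ideal.mem_bot] at hmem
            have hval := det_snoc_struct (V d) red (P d) t hred0
            rw [hmem] at hval
            have hz : red t * D.det = 0 := hval.symm
            show D.det • red t = 0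
            rw [smul_eq_mul, mul_comm]
            exact hz
      have hQmem : D.det * D.det ∈ Q := by
        rw [hQ]
        simp only [Submodule.mem_comap, LinearMap.toSpanSingleton_apply]
        have hsub : D.det • (D.det • w) - D.det • ∑ i, w (P d i) • v' i = 0 := by
          rw [← smul_sub, ← hredd, hdred]
        have hrw : (D.det * D.det) • w = D.det • ∑ i, w (P d i) • v' i := by
          rw [mul_smul, ← sub_eq_zero]
          exact hsub
        rw [hrw]
        exact Submodule.smul_mem _ _ (Submodule.sum_mem _ fun i _ =>
          Submodule.smul_mem _ _ (hv'N i))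
      have hdd : D.det * D.det ∈ m := hle hQmem
      rcases hm.isPrime.mem_or_mem hdd with h | h <;> exact hdetm h
    have h1Q : (1 : R) ∈ Q := by rw [hQtop]; trivial
    rw [hQ, Submodule.mem_comap, LinearMap.toSpanSingleton_apply, one_smul] at h1Q
    exact h1Q
  have hkerN : LinearMap.ker π = N := le_antisymm hker hNker
  exact Module.finitePresentation_of_free_of_surjective π hπ (hkerN ▸ hNfg)

/-! ### Forward direction -/

lemma forward_top [Module.Finite R M] {r : ℕ}
    (hloc : ∀ (p : Ideal R) [p.IsPrime],
      Module.Free (Localization.AtPrime p) (LocalizedModule p.primeCompl M) ∧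
      Module.finrank (Localization.AtPrime p) (LocalizedModule p.primeCompl M) = r) :
    fittingIdeal R M r = ⊤ := by
  classical
  by_contra hne
  obtain ⟨m, hm, hle⟩ := Ideal.exists_le_maximal _ hne
  haveI := hm.isPrime
  obtain ⟨hfree, hrank⟩ := hloc m
  haveI : Module.Finite (Localization.AtPrime m) (LocalizedModule m.primeCompl M) := by
    obtain ⟨n0, π0, hπ0⟩ := Module.Finite.exists_fin' R M
    exact Module.Finite.of_surjective (locMap m.primeCompl π0) (locMap_surjective _ hπ0)
  set A := Localization.AtPrime m with hA
  let B : Module.Basis (Fin r) A (LocalizedModule m.primeCompl M) :=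
    (Module.finBasis A (LocalizedModule m.primeCompl M)).reindex (finCongr (by rw [hrank]))
  have hBmk : ∀ i : Fin r, ∃ (x : M) (s : m.primeCompl), B i = LocalizedModule.mk x s :=
    fun i => LocalizedModule.induction_on (fun x s => ⟨x, s, rfl⟩) (B i)
  choose x sden hxs using hBmk
  obtain ⟨t, g, hg⟩ := Module.Finite.exists_fin (R := R) (M := M)
  set π : (Fin (r + t) → R) →ₗ[R] M :=
    Fintype.linearCombination R (Fin.append x g) with hπd
  have hπ : Surjective π := by
    rw [← LinearMap.range_eq_top, hπd, Fintype.range_linearCombination]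
    rw [eq_top_iff, ← hg]
    apply Submodule.span_mono
    rintro y ⟨j, rfl⟩
    exact ⟨Fin.natAdd r j, Fin.append_right x g j⟩
  set πS := locMap m.primeCompl π with hπS
  have hsingle : ∀ (idx : Fin (r + t)), πS (Pi.single idx (1 : A)) =
      LocalizedModule.mk (Fin.append x g idx) 1 := by
    intro idx
    rw [hπS, locMap_single, one_smul]
    congr 1
    rw [hπd, Fintype.linearCombination_apply_single, one_smul]
  set c : Fin r → Fin t → A := fun i j => B.repr (LocalizedModule.mk (g j) 1) i with hc
  have hBsum : ∀ j, (∑ i, c i j • B i) = LocalizedModule.mk (g j) 1 :=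
    fun j => B.sum_repr (LocalizedModule.mk (g j) 1)
  have hunit : ∀ i, IsUnit (algebraMap R A ((sden i : R))) :=
    fun i => IsLocalization.map_units A (sden i)
  have hxB : ∀ i, LocalizedModule.mk (x i) (1 : m.primeCompl)
      = algebraMap R A ((sden i : R)) • B i := by
    intro i
    rw [hxs i, algebraMap_smul, LocalizedModule.smul'_mk, LocalizedModule.mk_eq]
    exact ⟨1, by simp [Submonoid.smul_def]⟩
  set w : Fin t → Fin (r + t) → A := fun j =>
    Pi.single (Fin.natAdd r j) 1 -
      ∑ i, (c i j * ((hunit i).unit⁻¹ : Aˣ)) • Pi.single (Fin.castAdd t i) 1 with hw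
  have hwrel : ∀ j, πS (w j) = 0 := by
    intro j
    have hwj : w j = Pi.single (Fin.natAdd r j) 1 -
        ∑ i, (c i j * ((hunit i).unit⁻¹ : Aˣ)) • Pi.single (Fin.castAdd t i) 1 := by
      rw [hw]
    rw [hwj, map_sub, map_sum]
    have h1 : ∀ i : Fin r, πS ((c i j * ((hunit i).unit⁻¹ : Aˣ)) •
        Pi.single (Fin.castAdd t i) (1 : A)) = c i j • B i := by
      intro i
      have hinv : (((hunit i).unit⁻¹ : Aˣ) : A) * algebraMap R A ((sden i : R)) = 1 :=
        (hunit i).val_inv_mul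
      calc πS ((c i j * (((hunit i).unit⁻¹ : Aˣ) : A)) • Pi.single (Fin.castAdd t i) (1 : A))
          = (c i j * (((hunit i).unit⁻¹ : Aˣ) : A)) • LocalizedModule.mk (x i) 1 := by
            rw [_root_.map_smul, hsingle, show Fin.append x g (Fin.castAdd t i) = x i from
              Fin.append_left x g i]
        _ = (c i j * (((hunit i).unit⁻¹ : Aˣ) : A)) •
              (algebraMap R A ((sden i : R)) • B i) :=
            congrArg (fun z => (c i j * (((hunit i).unit⁻¹ : Aˣ) : A)) • z) (hxB i)
        _ = (c i j * ((((hunit i).unit⁻¹ : Aˣ) : A) * algebraMap R A ((sden i : R)))) • B i := by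
            rw [smul_smul, mul_assoc]
        _ = c i j • B i := by rw [hinv, mul_one]
    rw [Finset.sum_congr rfl fun i _ => h1 i, hsingle,
      show Fin.append x g (Fin.natAdd r j) = g j from Fin.append_right x g j, hBsum j, sub_self]
  have hmat : (Matrix.of fun (i j' : Fin t) => w j' (Fin.natAdd r i)) = 1 := by
    ext i j'
    rw [Matrix.of_apply, hw]
    simp only [Pi.sub_apply, Finset.sum_apply, Pi.smul_apply, smul_eq_mul]
    have hz : ∀ i' : Fin r, (Pi.single (Fin.castAdd t i') (1 : A) : Fin (r + t) → A)
        (Fin.natAdd r i) = 0 := by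
      intro i'
      apply Pi.single_eq_of_ne
      intro hcon
      have hval := congrArg Fin.val hcon
      simp only [Fin.coe_natAdd, Fin.coe_castAdd] at hval
      omega
    rw [Finset.sum_congr rfl fun i' _ => by rw [hz i', mul_zero]]
    rw [Finset.sum_const_zero, sub_zero]
    have hiff : (Fin.natAdd r i = Fin.natAdd r j') ↔ i = j' := by
      constructor
      · intro h
        have hval := congrArg Fin.val h
        simp only [Fin.coe_natAdd] at hval
        exact Fin.ext (by omega)
      · intro h
        rw [h]
    rw [Pi.single_apply, Matrix.one_apply, if_congr hiff rfl rfl]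
  have hud : IsUnit (Matrix.det (Matrix.of fun (i : Fin t) l => w l (Fin.natAdd r i))) := by
    rw [hmat, Matrix.det_one]
    exact isUnit_one
  obtain ⟨dd, hdF, hdu⟩ := exists_unit_det m.primeCompl hπ (show t = (r + t) - r by omega)
    w hwrel (fun i => Fin.natAdd r i) hud
  have hdm : dd ∈ m := hle hdF
  have hdc : dd ∈ m.primeCompl := (IsLocalization.AtPrime.isUnit_to_map_iff A m dd).mp hdu
  exact hdc hdm

lemma forward_bot [Module.Finite R M] [Nontrivial R] {r : ℕ} (hr : 1 ≤ r)
    (hloc : ∀ (p : Ideal R) [p.IsPrime],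
      Module.Free (Localization.AtPrime p) (LocalizedModule p.primeCompl M) ∧
      Module.finrank (Localization.AtPrime p) (LocalizedModule p.primeCompl M) = r) :
    fittingIdeal R M (r - 1) = ⊥ := by
  classical
  rw [eq_bot_iff]
  apply fittingIdeal_le
  intro n π hπ
  apply minorsSpan_le
  intro v ρ hrel
  rw [Ideal.mem_bot]
  by_contra hx
  set Q : Ideal R := LinearMap.ker (LinearMap.toSpanSingleton R R
    (Matrix.det (Matrix.of fun i l => v l (ρ i)))) with hQ
  have hQne : Q ≠ ⊤ := by
    intro hc
    have h1 : (1 : R) ∈ Q := by rw [hc]; trivial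
    rw [hQ, LinearMap.mem_ker, LinearMap.toSpanSingleton_apply, one_smul] at h1
    exact hx h1
  obtain ⟨m, hm, hle⟩ := Ideal.exists_le_maximal Q hQne
  haveI := hm.isPrime
  obtain ⟨hfree, hrank⟩ := hloc m
  set A := Localization.AtPrime m with hA
  set πS := locMap m.primeCompl π with hπS
  have hπSsurj : Surjective πS := locMap_surjective _ hπ
  haveI : Module.Finite A (LocalizedModule m.primeCompl M) :=
    Module.Finite.of_surjective πS hπSsurj
  have hrn : r ≤ n := by
    have h1 := πS.lift_rank_le_of_surjective hπSsurj
    rw [rank_fin_fun] at h1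
    rw [← Module.finrank_eq_rank, hrank] at h1
    simpa using h1
  set KK := LinearMap.ker πS with hKK
  set Bb := Module.finBasis A (LocalizedModule m.primeCompl M) with hBb
  set σ : LocalizedModule m.primeCompl M →ₗ[A] (Fin n → A) :=
    Bb.constr A fun jj => surjInv hπSsurj (Bb jj) with hσd
  have hσ : ∀ y, πS (σ y) = y := by
    have hcomp : πS ∘ₗ σ = LinearMap.id := by
      apply Bb.ext
      intro jj
      simp only [LinearMap.coe_comp, Function.comp_apply, LinearMap.id_coe, id_eq]
      rw [hσd, show (Bb.constr A fun jj => surjInv hπSsurj (Bb jj)) (Bb jj)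
        = surjInv hπSsurj (Bb jj) from Bb.constr_basis _ _ _]
      exact surjInv_eq hπSsurj _
    intro y
    exact DFunLike.congr_fun hcomp y
  set q : (Fin n → A) →ₗ[A] (Fin n → A) := LinearMap.id - σ ∘ₗ πS with hqd
  have hqapp : ∀ u, q u = u - σ (πS u) := fun u => rfl
  have hqK : ∀ u, q u ∈ KK := by
    intro u
    rw [hKK, LinearMap.mem_ker, hqapp, map_sub, hσ, sub_self]
  have hqid : ∀ u ∈ KK, q u = u := by
    intro u hu
    rw [hqapp, LinearMap.mem_ker.mp hu, map_zero, sub_zero]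
  set qK : (Fin n → A) →ₗ[A] KK := LinearMap.codRestrict KK q hqK with hqK'
  haveI : Module.Finite A KK := by
    apply Module.Finite.of_surjective qK
    rintro ⟨u, hu⟩
    exact ⟨u, Subtype.ext (hqid u hu)⟩
  haveI hKproj : Module.Projective A KK :=
    Module.Projective.of_split KK.subtype qK (by
      apply LinearMap.ext
      rintro ⟨u, hu⟩
      exact Subtype.ext (hqid u hu))
  haveI : Module.FinitePresentation A KK := Module.finitePresentation_of_projective A KK
  haveI : Module.Free A KK := Module.free_of_flat_of_isLocalRing
  set f2 : (Fin n → A) →ₗ[A] KK × (LocalizedModule m.primeCompl M) := qK.prod πS with hf2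
  set g2 : KK × (LocalizedModule m.primeCompl M) →ₗ[A] (Fin n → A) :=
    KK.subtype ∘ₗ LinearMap.fst A KK (LocalizedModule m.primeCompl M)
      + σ ∘ₗ LinearMap.snd A KK (LocalizedModule m.primeCompl M) with hg2
  have hfg : f2 ∘ₗ g2 = LinearMap.id := by
    apply LinearMap.ext
    rintro ⟨⟨u, hu⟩, y⟩
    have hval : g2 (⟨u, hu⟩, y) = u + σ y := rfl
    have hq0 : q (σ y) = 0 := by
      rw [hqapp, hσ, sub_self]
    apply Prod.ext
    · apply Subtype.ext
      show q (g2 (⟨u, hu⟩, y)) = u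
      rw [hval, map_add, hqid u hu, hq0, add_zero]
    · show πS (g2 (⟨u, hu⟩, y)) = y
      rw [hval, map_add, LinearMap.mem_ker.mp hu, hσ, zero_add]
  have hgf : g2 ∘ₗ f2 = LinearMap.id := by
    apply LinearMap.ext
    intro u
    show (q u : Fin n → A) + σ (πS u) = u
    rw [hqapp]
    exact sub_add_cancel u (σ (πS u))
  have hfr : Module.finrank A KK = n - r := by
    have h1 := (LinearEquiv.ofLinear f2 g2 hfg hgf).finrank_eq
    rw [Module.finrank_prod, hrank] at h1
    have h2 : Module.finrank A (Fin n → A) = n := Module.finrank_fin_fun A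
    rw [h2] at h1
    omega
  set cb : Module.Basis (Fin (n - r)) A KK := (Module.finBasis A KK).reindex (finCongr hfr) with hcb
  set wA : Fin (n - (r - 1)) → Fin n → A := fun l i => algebraMap R A (v l i) with hwA
  have hwK : ∀ l, wA l ∈ KK := by
    intro l
    rw [hKK, LinearMap.mem_ker]
    have h1 : πS (wA l) = LocalizedModule.mk (π (v l)) 1 := locMap_algebraMap _ π (v l)
    rw [h1, hrel l, LocalizedModule.zero_mk]
  set Cm : Matrix (Fin (n - r)) (Fin (n - (r - 1))) A :=
    Matrix.of fun u l => cb.repr ⟨wA l, hwK l⟩ u with hCm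
  set Pm : Matrix (Fin (n - (r - 1))) (Fin (n - r)) A :=
    Matrix.of fun i u => ((cb u : KK) : Fin n → A) (ρ i) with hPm
  have hfact : (Matrix.of fun i l => wA l (ρ i)) = Pm * Cm := by
    ext i l
    rw [Matrix.of_apply, Matrix.mul_apply]
    have h1 := cb.sum_repr ⟨wA l, hwK l⟩
    have h3 := congrArg (fun z : KK => ((z : Fin n → A)) (ρ i)) h1
    simp only [Submodule.coe_sum, Submodule.coe_smul, Finset.sum_apply, Pi.smul_apply,
      smul_eq_mul] at h3
    rw [← h3]
    refine Finset.sum_congr rfl fun u _ => ?_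
    rw [hPm, hCm, Matrix.of_apply, Matrix.of_apply, mul_comm]
  have hdetz : Matrix.det (Matrix.of fun i l => wA l (ρ i)) = 0 := by
    rw [hfact]
    exact det_factor_eq_zero (by omega) Pm Cm
  have hmap0 : algebraMap R A (Matrix.det (Matrix.of fun i l => v l (ρ i))) = 0 := by
    rw [RingHom.map_det]
    rw [show (algebraMap R A).mapMatrix (Matrix.of fun i l => v l (ρ i))
      = Matrix.of fun i l => wA l (ρ i) from rfl]
    exact hdetz
  obtain ⟨u, hu⟩ := (IsLocalization.map_eq_zero_iff m.primeCompl A _).mp hmap0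
  have huQ : (u : R) ∈ Q := by
    rw [hQ, LinearMap.mem_ker, LinearMap.toSpanSingleton_apply, smul_eq_mul]
    exact hu
  exact u.2 (hle huQ)

end FittingProofAux

theorem projective_constant_rank_iff_fittingIdeals
    (R : Type*) [CommRing R] (M : Type*) [AddCommGroup M] [Module R M]
    [Module.Finite R M] (r : ℕ) :
    (Module.Projective R M ∧
        ∀ (p : Ideal R) [p.IsPrime],
          Module.Free (Localization.AtPrime p) (LocalizedModule p.primeCompl M) ∧
          Module.finrank (Localization.AtPrime p) (LocalizedModule p.primeCompl M) = r)
      ↔ (fittingIdealZ R M ((r : ℤ) - 1) = ⊥ ∧ fittingIdeal R M r = ⊤) := by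
  classical
  rcases subsingleton_or_nontrivial R with hR | hR
  · haveI : Subsingleton M := Module.subsingleton R M
    have hII : ∀ I J : Ideal R, I = J := fun I J => by
      ext x
      rw [Subsingleton.elim x 0]
      simp
    constructor
    · intro _
      exact ⟨hII _ _, hII _ _⟩
    · intro _
      refine ⟨inferInstance, ?_⟩
      intro p hp
      exact absurd (hII p ⊤) hp.ne_top
  · constructor
    · rintro ⟨hproj, hloc⟩
      constructor
      · rcases Nat.eq_zero_or_pos r with hr0 | hrpos
        · subst hr0
          have hcond : ((0 : ℕ) : ℤ) - 1 < 0 := by norm_num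
          simp only [fittingIdealZ]
          rw [if_pos hcond]
        · have hcond : ¬ ((r : ℤ) - 1 < 0) := by omega
          simp only [fittingIdealZ]
          rw [if_neg hcond, show ((r : ℤ) - 1).toNat = r - 1 by omega]
          exact FittingProofAux.forward_bot hrpos hloc
      · exact FittingProofAux.forward_top hloc
    · rintro ⟨hz, ht⟩
      have h0 : 1 ≤ r → fittingIdeal R M (r - 1) = ⊥ := by
        intro hr
        have hcond : ¬ ((r : ℤ) - 1 < 0) := by omega
        have hz' := hz
        simp only [fittingIdealZ] at hz'
        rw [if_neg hcond, show ((r : ℤ) - 1).toNat = r - 1 by omega] at hz'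
        exact hz'
      refine ⟨?_, fun p hp => FittingProofAux.free_localized_of_fitting h0 ht p⟩
      haveI := FittingProofAux.finitePresentation_of_fitting h0 ht
      apply Module.projective_of_localization_maximal
      intro I hI
      haveI := hI.isPrime
      haveI := (FittingProofAux.free_localized_of_fitting h0 ht I).1
      infer_instance
end

section
/- Let D be a triangulated category and A ⊆ D an admissible full triangulated subcategory (so there are semiorthogonal decompositions D = ⟨A^⊥, A⟩ = ⟨A, ^⊥A⟩). Then the left mutation functor L_A = i_{A^⊥} ∘ i*_{A^⊥} and the right mutation functor R_A = i_{^⊥A} ∘ i^!_{^⊥A} restrict to mutually inverse equivalences L_A|_{^⊥A}: ^⊥A ≃ A^⊥ and R_A|_{A^⊥}: A^⊥ ≃ ^⊥A. -/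
/-!
STATEMENT 9: let `D` be a triangulated category and `A ⊆ D` an admissible full triangulated
subcategory, so that there are semiorthogonal decompositions `D = ⟨A^⊥, A⟩ = ⟨A, ^⊥A⟩`, i.e.
the inclusion of `A^⊥` admits a left adjoint `i*_{A^⊥}` and the inclusion of `^⊥A` admits a
right adjoint `i^!_{^⊥A}` (and the inclusion of `A` admits both adjoints).  Then the left
mutation functor `L_A = i_{A^⊥} ∘ i*_{A^⊥}` and the right mutation functor
`R_A = i_{^⊥A} ∘ i^!_{^⊥A}` restrict to mutually inverse equivalences
`L_A|_{^⊥A} : ^⊥A ≃ A^⊥` and `R_A|_{A^⊥} : A^⊥ ≃ ^⊥A`.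
-/

open CategoryTheory CategoryTheory.Limits CategoryTheory.Pretriangulated

universe v u

variable {C : Type u} [Category.{v} C]

/-- The right orthogonal `A^⊥ = {X | Hom(a, X[n]) = 0 for all a ∈ A, n ∈ ℤ}`. -/
def rightOrth [Preadditive C] [HasShift C ℤ] (A : C → Prop) : C → Prop :=
  fun X => ∀ ⦃a : C⦄, A a → ∀ n : ℤ, ∀ f : a ⟶ (X⟦n⟧ : C), f = 0

/-- The left orthogonal `^⊥A = {X | Hom(X, a[n]) = 0 for all a ∈ A, n ∈ ℤ}`. -/
def leftOrth [Preadditive C] [HasShift C ℤ] (A : C → Prop) : C → Prop :=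
  fun X => ∀ ⦃a : C⦄, A a → ∀ n : ℤ, ∀ f : X ⟶ (a⟦n⟧ : C), f = 0

section Aux

set_option linter.unusedSectionVars false
variable [HasZeroObject C] [Preadditive C] [HasShift C ℤ]
  [∀ n : ℤ, (shiftFunctor C n).Additive] [Pretriangulated C]

lemma rightOrth_hom_zero (A : C → Prop) {a z : C} (hz : rightOrth A z) (ha : A a)
    (f : a ⟶ z) : f = 0 := by
  have h : f ≫ (shiftFunctorZero C ℤ).inv.app z = 0 := hz ha 0 _
  rw [← cancel_mono ((shiftFunctorZero C ℤ).inv.app z), h, zero_comp]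

lemma leftOrth_hom_zero (A : C → Prop) {x a : C} (hx : leftOrth A x) (ha : A a)
    (f : x ⟶ a) : f = 0 := by
  have h : f ≫ (shiftFunctorZero C ℤ).inv.app a = 0 := hx ha 0 _
  rw [← cancel_mono ((shiftFunctorZero C ℤ).inv.app a), h, zero_comp]

lemma mem_rightOrth_of_forall (A : C → Prop) (hshift : ∀ X, A X → ∀ n : ℤ, A (X⟦n⟧))
    {z : C} (h : ∀ b, A b → ∀ f : b ⟶ z, f = 0) : rightOrth A z := by
  intro b hb n f
  have adj := (shiftEquiv' C (-n) n (neg_add_cancel n)).toAdjunction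
  have h0 : (adj.homEquiv b z).symm f = 0 := h _ (hshift b hb (-n)) _
  have h1 := (adj.homEquiv b z).apply_symm_apply f
  rw [h0] at h1
  rw [← h1, Adjunction.homEquiv_unit, Functor.map_zero, comp_zero]
  rfl

lemma mem_leftOrth_of_forall (A : C → Prop) (hshift : ∀ X, A X → ∀ n : ℤ, A (X⟦n⟧))
    {v : C} (h : ∀ b, A b → ∀ f : v ⟶ b, f = 0) : leftOrth A v :=
  fun a ha n f => h _ (hshift a ha n) f

lemma rightOrth_shift (A : C → Prop) {z : C} (hz : rightOrth A z) (n : ℤ) :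
    rightOrth A (z⟦n⟧) := by
  intro b hb m f
  have h : f ≫ (shiftFunctorAdd' C n m (n + m) rfl).inv.app z = 0 := hz hb (n + m) _
  rw [← cancel_mono ((shiftFunctorAdd' C n m (n + m) rfl).inv.app z), h, zero_comp]

lemma leftOrth_shift (A : C → Prop) (hshift : ∀ X, A X → ∀ n : ℤ, A (X⟦n⟧))
    {x : C} (hx : leftOrth A x) (n : ℤ) : leftOrth A (x⟦n⟧) := by
  intro a ha m f
  have adj := (shiftEquiv' C n (-n) (add_neg_cancel n)).toAdjunction
  have h0 : adj.homEquiv x (a⟦m⟧) f = 0 := hx (hshift a ha m) (-n) _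
  have h1 := (adj.homEquiv x (a⟦m⟧)).symm_apply_apply f
  rw [h0] at h1
  rw [← h1, Adjunction.homEquiv_counit, Functor.map_zero, zero_comp]
  rfl

lemma precomp_shift_bij (S : C → Prop) (hS : ∀ c, S c → ∀ n : ℤ, S (c⟦n⟧))
    {x y : C} (e : x ⟶ y)
    (hbij : ∀ c, S c → Function.Bijective (fun ψ : y ⟶ c => e ≫ ψ))
    (c : C) (hc : S c) (n : ℤ) :
    Function.Bijective (fun ψ : y⟦n⟧ ⟶ c => (shiftFunctor C n).map e ≫ ψ) := by
  have adj := (shiftEquiv' C n (-n) (add_neg_cancel n)).toAdjunction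
  have key : (fun ψ : y⟦n⟧ ⟶ c => (shiftFunctor C n).map e ≫ ψ) =
      fun ψ => (adj.homEquiv x c).symm (e ≫ adj.homEquiv y c ψ) := by
    funext ψ
    apply (adj.homEquiv x c).injective
    rw [Equiv.apply_symm_apply]
    exact Adjunction.homEquiv_naturality_left adj e ψ
  rw [key]
  exact (adj.homEquiv x c).symm.bijective.comp
    ((hbij _ (hS c hc (-n))).comp (adj.homEquiv y c).bijective)

lemma postcomp_shift_bij (S : C → Prop) (hS : ∀ c, S c → ∀ n : ℤ, S (c⟦n⟧))
    {x y : C} (e : x ⟶ y)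
    (hbij : ∀ c, S c → Function.Bijective (fun ψ : c ⟶ x => ψ ≫ e))
    (c : C) (hc : S c) (n : ℤ) :
    Function.Bijective (fun ψ : c ⟶ x⟦n⟧ => ψ ≫ (shiftFunctor C n).map e) := by
  have adj := (shiftEquiv' C (-n) n (neg_add_cancel n)).toAdjunction
  have key : (fun ψ : c ⟶ x⟦n⟧ => ψ ≫ (shiftFunctor C n).map e) =
      fun ψ => adj.homEquiv c y ((adj.homEquiv c x).symm ψ ≫ e) := by
    funext ψ
    rw [Adjunction.homEquiv_naturality_right]
    erw [Equiv.apply_symm_apply]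
    rfl
  rw [key]
  exact (adj.homEquiv c y).bijective.comp
    ((hbij _ (hS c hc (-n))).comp (adj.homEquiv c x).symm.bijective)

lemma cone_vanish (S : C → Prop) (hS : ∀ c, S c → ∀ n : ℤ, S (c⟦n⟧))
    {W x y : C} {f : W ⟶ x} {e : x ⟶ y} {h : y ⟶ W⟦(1 : ℤ)⟧}
    (hT : Triangle.mk f e h ∈ distTriang C)
    (hbij : ∀ c, S c → Function.Bijective (fun ψ : y ⟶ c => e ≫ ψ))
    (c : C) (hc : S c) (ψ : W ⟶ c) : ψ = 0 := by
  have h12 : f ≫ e = 0 := comp_distTriang_mor_zero₁₂ _ hT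
  have h23 : e ≫ h = 0 := comp_distTriang_mor_zero₂₃ _ hT
  apply (shiftFunctor C (1 : ℤ)).map_injective
  rw [Functor.map_zero]
  have hT2 : (Triangle.mk f e h).rotate.rotate ∈ distTriang C :=
    rot_of_distTriang _ (rot_of_distTriang _ hT)
  have h1 : h ≫ (shiftFunctor C (1 : ℤ)).map ψ = 0 := by
    apply (hbij _ (hS c hc 1)).injective
    show e ≫ h ≫ (shiftFunctor C (1 : ℤ)).map ψ = e ≫ 0
    rw [comp_zero, ← Category.assoc, h23, zero_comp]
  obtain ⟨g, hg⟩ := Triangle.yoneda_exact₂ _ hT2 ((shiftFunctor C (1 : ℤ)).map ψ) h1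
  dsimp [Triangle.rotate] at hg
  obtain ⟨g', hg'⟩ := (precomp_shift_bij S hS e hbij _ (hS c hc 1) 1).surjective g
  have hg'' : (shiftFunctor C (1 : ℤ)).map e ≫ g' = g := hg'
  erw [hg]
  erw [← hg'', Preadditive.neg_comp, ← Category.assoc, ← Functor.map_comp, h12,
    Functor.map_zero, zero_comp, neg_zero]
  rfl

lemma cocone_vanish (S : C → Prop) (hS : ∀ c, S c → ∀ n : ℤ, S (c⟦n⟧))
    {x y V : C} {e : x ⟶ y} {g : y ⟶ V} {h : V ⟶ x⟦(1 : ℤ)⟧}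
    (hT : Triangle.mk e g h ∈ distTriang C)
    (hbij : ∀ c, S c → Function.Bijective (fun ψ : c ⟶ x => ψ ≫ e))
    (c : C) (hc : S c) (ψ : c ⟶ V) : ψ = 0 := by
  have h12 : e ≫ g = 0 := comp_distTriang_mor_zero₁₂ _ hT
  have h31 : h ≫ (shiftFunctor C (1 : ℤ)).map e = 0 := comp_distTriang_mor_zero₃₁ _ hT
  have h1 : ψ ≫ h = 0 := by
    apply (postcomp_shift_bij S hS e hbij c hc 1).injective
    show (ψ ≫ h) ≫ (shiftFunctor C (1 : ℤ)).map e = (0 : c ⟶ x⟦(1 : ℤ)⟧) ≫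
      (shiftFunctor C (1 : ℤ)).map e
    rw [zero_comp, Category.assoc, h31, comp_zero]
  obtain ⟨ρ, hρ⟩ := Triangle.coyoneda_exact₃ _ hT ψ h1
  have hm2 : (Triangle.mk e g h).mor₂ = g := rfl
  rw [hm2] at hρ
  obtain ⟨ρ', hρ'⟩ := (hbij c hc).surjective ρ
  have hρ'' : ρ' ≫ e = ρ := hρ'
  rw [hρ, ← hρ'']
  exact (Category.assoc ρ' e g).trans (by rw [h12, comp_zero])

lemma homMk_bijective {P : ObjectProperty C} (X Y : P.FullSubcategory) :
    Function.Bijective (ObjectProperty.homMk : (X.obj ⟶ Y.obj) → (X ⟶ Y)) :=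
  ⟨fun a b h => congrArg InducedCategory.Hom.hom h, ObjectProperty.homMk_surjective⟩

lemma unit_postcomp_bijective (A : C → Prop) (hshift : ∀ X, A X → ∀ n : ℤ, A (X⟦n⟧))
    (Aright : C ⥤ ObjectProperty.FullSubcategory A) (adjA₂ : ObjectProperty.ι A ⊣ Aright)
    (P : C ⥤ ObjectProperty.FullSubcategory (rightOrth A))
    (adjP : P ⊣ ObjectProperty.ι (rightOrth A))
    {x x' : C} (hx : leftOrth A x) (hx' : leftOrth A x') :
    Function.Bijective (fun φ : x ⟶ x' => φ ≫ adjP.unit.app x') := by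
  let η : x' ⟶ (P ⋙ ObjectProperty.ι (rightOrth A)).obj x' := adjP.unit.app x'
  show Function.Bijective (fun φ : x ⟶ x' => φ ≫ η)
  obtain ⟨W, k, h, hT⟩ := distinguished_cocone_triangle₁ η
  have factB : ∀ c, rightOrth A c → Function.Bijective
      (fun ψ : (P ⋙ ObjectProperty.ι (rightOrth A)).obj x' ⟶ c =>
        η ≫ ψ) := fun c hc => (adjP.homEquiv x' ⟨c, hc⟩).bijective.comp (homMk_bijective _ _)
  have hW : ∀ c, rightOrth A c → ∀ ψ : W ⟶ c, ψ = 0 :=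
    fun c hc ψ => cone_vanish (rightOrth A) (fun c hc n => rightOrth_shift A hc n)
      hT factB c hc ψ
  -- decompose W via the counit of adjA₂
  let εW : (ObjectProperty.ι A).obj (Aright.obj W) ⟶ W := adjA₂.counit.app W
  obtain ⟨zW, gW, hW', hTW⟩ := distinguished_cocone_triangle εW
  have factA : ∀ c, A c → Function.Bijective
      (fun ψ : c ⟶ (ObjectProperty.ι A).obj (Aright.obj W) => ψ ≫ εW) :=
    fun c hc => (adjA₂.homEquiv ⟨c, hc⟩ W).symm.bijective.comp (homMk_bijective _ _)
  have hzW : rightOrth A zW := mem_rightOrth_of_forall A hshift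
    (fun b hb ψ => cocone_vanish A (fun c hc n => hshift c hc n) hTW factA b hb ψ)
  have hgW : gW = 0 := hW zW hzW gW
  obtain ⟨s, hs⟩ := Triangle.coyoneda_exact₂ _ hTW (𝟙 W)
    (by show 𝟙 W ≫ gW = 0; rw [hgW, comp_zero])
  have hs' : 𝟙 W = s ≫ εW := hs
  have hxW : ∀ (n : ℤ) (χ : x ⟶ W⟦n⟧), χ = 0 := by
    intro n χ
    have h2 : χ = (χ ≫ (shiftFunctor C n).map s) ≫ (shiftFunctor C n).map εW := by
      erw [Category.assoc, ← Functor.map_comp, ← hs', CategoryTheory.Functor.map_id,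
        Category.comp_id]
    erw [h2, hx (Aright.obj W).property n (χ ≫ (shiftFunctor C n).map s), zero_comp]
  have hxW0 : ∀ χ : x ⟶ W, χ = 0 := by
    intro χ
    have h2 : χ = (χ ≫ s) ≫ εW := by
      erw [Category.assoc, ← hs', Category.comp_id]
    erw [h2, leftOrth_hom_zero A hx (Aright.obj W).property (χ ≫ s), zero_comp]
  constructor
  · intro a b hab
    have hab' : a ≫ η = b ≫ η := hab
    have hsub : (a - b) ≫ η = 0 := by
      rw [Preadditive.sub_comp, hab', sub_self]
    obtain ⟨ρ, hρ⟩ := Triangle.coyoneda_exact₂ _ hT (a - b) hsub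
    have hρ' : a - b = ρ ≫ k := hρ
    erw [hxW0 ρ, zero_comp] at hρ'
    exact sub_eq_zero.mp hρ'
  · intro φ
    have h3 : φ ≫ h = 0 := hxW 1 (φ ≫ h)
    obtain ⟨ρ, hρ⟩ := Triangle.coyoneda_exact₃ _ hT φ h3
    exact ⟨ρ, hρ.symm⟩

lemma counit_precomp_bijective (A : C → Prop) (hshift : ∀ X, A X → ∀ n : ℤ, A (X⟦n⟧))
    (Aleft : C ⥤ ObjectProperty.FullSubcategory A) (adjA₁ : Aleft ⊣ ObjectProperty.ι A)
    (Q : C ⥤ ObjectProperty.FullSubcategory (leftOrth A))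
    (adjQ : ObjectProperty.ι (leftOrth A) ⊣ Q)
    {y y' : C} (hy : rightOrth A y) (hy' : rightOrth A y') :
    Function.Bijective (fun φ : y ⟶ y' => adjQ.counit.app y ≫ φ) := by
  let ε : (Q ⋙ ObjectProperty.ι (leftOrth A)).obj y ⟶ y := adjQ.counit.app y
  show Function.Bijective (fun φ : y ⟶ y' => ε ≫ φ)
  obtain ⟨V, gV, hV, hT⟩ := distinguished_cocone_triangle ε
  have factQ : ∀ c, leftOrth A c → Function.Bijective
      (fun ψ : c ⟶ (Q ⋙ ObjectProperty.ι (leftOrth A)).obj y => ψ ≫ ε) :=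
    fun c hc => (adjQ.homEquiv ⟨c, hc⟩ y).symm.bijective.comp (homMk_bijective _ _)
  have hV0 : ∀ c, leftOrth A c → ∀ ψ : c ⟶ V, ψ = 0 :=
    fun c hc ψ => cocone_vanish (leftOrth A) (fun c hc n => leftOrth_shift A hshift hc n)
      hT factQ c hc ψ
  -- decompose V via the unit of adjA₁
  let uV : V ⟶ (ObjectProperty.ι A).obj (Aleft.obj V) := adjA₁.unit.app V
  obtain ⟨vV, m, hm, hTV⟩ := distinguished_cocone_triangle₁ uV
  have factA : ∀ c, A c → Function.Bijective
      (fun ψ : (ObjectProperty.ι A).obj (Aleft.obj V) ⟶ c => uV ≫ ψ) :=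
    fun c hc => (adjA₁.homEquiv V ⟨c, hc⟩).bijective.comp (homMk_bijective _ _)
  have hvV : leftOrth A vV := mem_leftOrth_of_forall A hshift
    (fun b hb ψ => cone_vanish A (fun c hc n => hshift c hc n) hTV factA b hb ψ)
  have hm0 : m = 0 := hV0 vV hvV m
  obtain ⟨r, hr⟩ := Triangle.yoneda_exact₂ _ hTV (𝟙 V)
    (by show m ≫ 𝟙 V = 0; rw [hm0, zero_comp])
  have hr' : 𝟙 V = uV ≫ r := hr
  have hVy' : ∀ (n : ℤ) (χ : V⟦n⟧ ⟶ y'), χ = 0 := by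
    intro n χ
    have h2 : χ = (shiftFunctor C n).map uV ≫ ((shiftFunctor C n).map r ≫ χ) := by
      erw [← Category.assoc, ← Functor.map_comp, ← hr', CategoryTheory.Functor.map_id,
        Category.id_comp]
    erw [h2, rightOrth_hom_zero A hy' (hshift _ (Aleft.obj V).property n)
      ((shiftFunctor C n).map r ≫ χ), comp_zero]
  have hVy'0 : ∀ χ : V ⟶ y', χ = 0 := by
    intro χ
    have h2 : χ = uV ≫ (r ≫ χ) := by
      erw [← Category.assoc, ← hr', Category.id_comp]
    erw [h2, rightOrth_hom_zero A hy' (Aleft.obj V).property (r ≫ χ), comp_zero]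
  constructor
  · intro a b hab
    have hab' : ε ≫ a = ε ≫ b := hab
    have hsub : ε ≫ (a - b) = 0 := by
      rw [Preadditive.comp_sub, hab', sub_self]
    obtain ⟨ρ, hρ⟩ := Triangle.yoneda_exact₂ _ hT (a - b) hsub
    have hρ' : a - b = gV ≫ ρ := hρ
    erw [hVy'0 ρ, comp_zero] at hρ'
    exact sub_eq_zero.mp hρ'
  · intro φ
    have hT' := inv_rot_of_distTriang _ hT
    obtain ⟨ρ, hρ⟩ := Triangle.yoneda_exact₂ _ hT' φ
      (hVy' (-1) ((Triangle.mk ε gV hV).invRotate.mor₁ ≫ φ))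
    exact ⟨ρ, hρ.symm⟩

end Aux

theorem mutation_equivalence_of_admissible
    {C : Type u} [Category.{v} C] [HasZeroObject C] [Preadditive C] [HasShift C ℤ]
    [∀ n : ℤ, (shiftFunctor C n).Additive] [Pretriangulated C] [IsTriangulated C]
    (A : C → Prop)
    -- `A` is a full triangulated subcategory: closed under shifts and triangles
    (hshift : ∀ X, A X → ∀ n : ℤ, A (X⟦n⟧))
    (htriangle : ∀ T : Triangle C, (T ∈ distTriang C) → A T.obj₁ → A T.obj₂ → A T.obj₃)
    -- `A` is admissible: its inclusion has a left adjoint and a right adjoint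
    (Aleft : C ⥤ ObjectProperty.FullSubcategory A) (adjA₁ : Aleft ⊣ ObjectProperty.ι A)
    (Aright : C ⥤ ObjectProperty.FullSubcategory A) (adjA₂ : ObjectProperty.ι A ⊣ Aright)
    -- the projection `i*_{A^⊥}` (left adjoint of the inclusion of `A^⊥`), giving `D = ⟨A^⊥, A⟩`
    (P : C ⥤ ObjectProperty.FullSubcategory (rightOrth A))
    (adjP : P ⊣ ObjectProperty.ι (rightOrth A))
    -- the projection `i^!_{^⊥A}` (right adjoint of the inclusion of `^⊥A`), giving `D = ⟨A, ^⊥A⟩`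
    (Q : C ⥤ ObjectProperty.FullSubcategory (leftOrth A))
    (adjQ : ObjectProperty.ι (leftOrth A) ⊣ Q) :
    -- the mutations `L_A = i_{A^⊥} ∘ i*_{A^⊥}` and `R_A = i_{^⊥A} ∘ i^!_{^⊥A}` restrict to
    -- mutually inverse equivalences `^⊥A ≃ A^⊥` and `A^⊥ ≃ ^⊥A`:
    ∃ E : ObjectProperty.FullSubcategory (leftOrth A) ≌ ObjectProperty.FullSubcategory (rightOrth A),
      Nonempty ((ObjectProperty.ι (leftOrth A) ⋙
            (P ⋙ ObjectProperty.ι (rightOrth A)))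
          ≅ E.functor ⋙ ObjectProperty.ι (rightOrth A)) ∧
      Nonempty ((ObjectProperty.ι (rightOrth A) ⋙
            (Q ⋙ ObjectProperty.ι (leftOrth A)))
          ≅ E.inverse ⋙ ObjectProperty.ι (leftOrth A)) := by

  let iL := ObjectProperty.ι (leftOrth A)
  let iR := ObjectProperty.ι (rightOrth A)
  let F : ObjectProperty.FullSubcategory (leftOrth A) ⥤ ObjectProperty.FullSubcategory (rightOrth A) := iL ⋙ P
  let G : ObjectProperty.FullSubcategory (rightOrth A) ⥤ ObjectProperty.FullSubcategory (leftOrth A) := iR ⋙ Q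
  let adjFG : F ⊣ G := Adjunction.mkOfHomEquiv
    { homEquiv := fun X Y => (adjP.homEquiv (iL.obj X) Y).trans (adjQ.homEquiv X (iR.obj Y))
      homEquiv_naturality_left_symm := by
        intro X' X Y f g
        show (adjP.homEquiv (iL.obj X') Y).symm ((adjQ.homEquiv X' (iR.obj Y)).symm (f ≫ g)) =
          F.map f ≫ (adjP.homEquiv (iL.obj X) Y).symm ((adjQ.homEquiv X (iR.obj Y)).symm g)
        rw [Adjunction.homEquiv_naturality_left_symm adjQ f g,
          Adjunction.homEquiv_naturality_left_symm adjP (iL.map f)]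
        rfl
      homEquiv_naturality_right := by
        intro X Y Y' f g
        show adjQ.homEquiv X (iR.obj Y') (adjP.homEquiv (iL.obj X) Y' (f ≫ g)) =
          adjQ.homEquiv X (iR.obj Y) (adjP.homEquiv (iL.obj X) Y f) ≫ G.map g
        rw [Adjunction.homEquiv_naturality_right adjP f g,
          Adjunction.homEquiv_naturality_right adjQ _ (iR.map g)]
        rfl }
  have hcommF : ∀ (X X' : ObjectProperty.FullSubcategory (leftOrth A)) (φ : X ⟶ X'),
      adjP.homEquiv (iL.obj X) (P.obj (iL.obj X')) (F.map φ)
        = iL.map φ ≫ adjP.unit.app (iL.obj X') := by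
    intro X X' φ
    rw [Adjunction.homEquiv_unit]
    exact (adjP.unit.naturality (iL.map φ)).symm
  have hcommG : ∀ (Y Y' : ObjectProperty.FullSubcategory (rightOrth A)) (φ : Y ⟶ Y'),
      (adjQ.homEquiv (Q.obj (iR.obj Y)) (iR.obj Y')).symm (G.map φ)
        = adjQ.counit.app (iR.obj Y) ≫ iR.map φ := by
    intro Y Y' φ
    rw [Adjunction.homEquiv_counit]
    exact adjQ.counit.naturality (iR.map φ)
  haveI hFfull : F.Full := by
    constructor
    intro X X' g
    obtain ⟨φc, hφc⟩ := (unit_postcomp_bijective A hshift Aright adjA₂ P adjP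
      X.property X'.property).surjective
      (adjP.homEquiv (iL.obj X) (P.obj (iL.obj X')) g)
    refine ⟨ObjectProperty.homMk φc, ?_⟩
    apply (adjP.homEquiv (iL.obj X) (P.obj (iL.obj X'))).injective
    rw [hcommF X X' (ObjectProperty.homMk φc)]
    exact hφc
  haveI hFfaithful : F.Faithful := by
    constructor
    intro X X' φ ψ hφψ
    apply iL.map_injective
    apply (unit_postcomp_bijective A hshift Aright adjA₂ P adjP
      X.property X'.property).injective
    show iL.map φ ≫ adjP.unit.app (iL.obj X') = iL.map ψ ≫ adjP.unit.app (iL.obj X')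
    rw [← hcommF X X' φ, ← hcommF X X' ψ, hφψ]
  haveI hGfull : G.Full := by
    constructor
    intro Y Y' g
    obtain ⟨φc, hφc⟩ := (counit_precomp_bijective A hshift Aleft adjA₁ Q adjQ
      Y.property Y'.property).surjective
      ((adjQ.homEquiv (Q.obj (iR.obj Y)) (iR.obj Y')).symm g)
    refine ⟨ObjectProperty.homMk φc, ?_⟩
    apply (adjQ.homEquiv (Q.obj (iR.obj Y)) (iR.obj Y')).symm.injective
    rw [hcommG Y Y' (ObjectProperty.homMk φc)]
    exact hφc
  haveI hGfaithful : G.Faithful := by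
    constructor
    intro Y Y' φ ψ hφψ
    apply iR.map_injective
    apply (counit_precomp_bijective A hshift Aleft adjA₁ Q adjQ
      Y.property Y'.property).injective
    show adjQ.counit.app (iR.obj Y) ≫ iR.map φ = adjQ.counit.app (iR.obj Y) ≫ iR.map ψ
    rw [← hcommG Y Y' φ, ← hcommG Y Y' ψ, hφψ]
  haveI hu : IsIso adjFG.unit := inferInstance
  haveI hc : IsIso adjFG.counit := inferInstance
  exact ⟨CategoryTheory.Equivalence.mk F G (asIso adjFG.unit) (asIso adjFG.counit),
    ⟨(Functor.associator iL P iR).symm⟩, ⟨(Functor.associator iR Q iL).symm⟩⟩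
end

section
/- Let X be a connected scheme and G a quasi-coherent O_X-module admitting, Zariski-locally, a finite resolution 0 → F_n → … → F_1 → F_0 → G → 0 by finite free modules. Then the function x ↦ Σ_{i=0}^n (−1)^i rank_{O_{X,x}}(F_{i,x}) is a well-defined locally constant function on X independent of the choice of local resolution; moreover this rank is ≥ 0 whenever G ≠ 0 has homological dimension ≤ n in this sense. -/
set_option maxHeartbeats 1000000

universe u v
open TensorProduct


section Ann
variable {S : Type*} [CommRing S] [Nontrivial S]

lemma exists_ne_zero_ann_of_nilpotent_list :
    ∀ (l : List S), (∀ x ∈ l, IsNilpotent x) → ∃ s : S, s ≠ 0 ∧ ∀ x ∈ l, s * x = 0 := by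
  intro l
  induction l with
  | nil => exact fun _ => ⟨1, one_ne_zero, by simp⟩
  | cons x l ih =>
      intro h
      obtain ⟨s, hs, hsl⟩ := ih (fun y hy => h y (List.mem_cons_of_mem _ hy))
      obtain ⟨N, hN⟩ := h x List.mem_cons_self
      have hP : ∃ m, s * x ^ m = 0 := ⟨N, by rw [hN, mul_zero]⟩
      classical
      have hm : s * x ^ (Nat.find hP) = 0 := Nat.find_spec hP
      have hm0 : Nat.find hP ≠ 0 := by
        intro h0
        apply hs
        simpa [h0] using hm
      refine ⟨s * x ^ (Nat.find hP - 1), Nat.find_min hP (by omega), ?_⟩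
      intro y hy
      rcases List.mem_cons.mp hy with rfl | hy
      · rw [mul_assoc, ← pow_succ, show Nat.find hP - 1 + 1 = Nat.find hP by omega]
        exact hm
      · rw [mul_comm s (x ^ (Nat.find hP - 1)), mul_assoc, hsl y hy, mul_zero]

lemma exists_ne_zero_ann_of_nilpotent_fun {ι : Type*} [Fintype ι] (f : ι → S)
    (h : ∀ i, IsNilpotent (f i)) : ∃ s : S, s ≠ 0 ∧ ∀ i, s * f i = 0 := by
  obtain ⟨s, hs, hann⟩ := exists_ne_zero_ann_of_nilpotent_list
    ((Finset.univ : Finset ι).toList.map f) (by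
      intro x hx
      obtain ⟨i, -, rfl⟩ := List.mem_map.mp hx
      exact h i)
  exact ⟨s, hs, fun i => hann _ (List.mem_map_of_mem (f := f) (by simp))⟩

end Ann

section SES

variable {S : Type u} [CommRing S] [IsLocalRing S]

lemma exists_compl_free (hnil : ∀ x ∈ IsLocalRing.maximalIdeal S, IsNilpotent x) :
    ∀ (k : ℕ) (α β : Type) [Fintype α] [Fintype β] [DecidableEq α] [DecidableEq β],
      Fintype.card α = k →
      ∀ (M : Type v) [AddCommGroup M] [Module S M]
        (φ : (α → S) →ₗ[S] (β → S)) (ε : (β → S) →ₗ[S] M),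
        Function.Injective φ → Function.Surjective ε → Function.Exact φ ε →
        ∃ r : ℕ, r + Fintype.card α = Fintype.card β ∧ Nonempty ((Fin r → S) ≃ₗ[S] M) := by
  intro k
  induction k with
  | zero =>
      intro α β _ _ _ _ hcard M _ _ φ ε hφ hε hex
      haveI : IsEmpty α := Fintype.card_eq_zero_iff.mp hcard
      have hinj : Function.Injective ε := by
        intro x y hxy
        obtain ⟨w, hw⟩ := (hex (x - y)).mp (by rw [map_sub, hxy, sub_self])
        rw [Subsingleton.elim w 0, map_zero] at hw
        exact sub_eq_zero.mp hw.symm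
      refine ⟨Fintype.card β, by simp [hcard], ⟨?_⟩⟩
      exact (LinearEquiv.funCongrLeft S S (Fintype.equivFin β)).trans
        (LinearEquiv.ofBijective ε ⟨hinj, hε⟩)
  | succ k IH =>
      intro α β _ _ _ _ hcard M _ _ φ ε hφ hε hex
      obtain ⟨b⟩ : Nonempty α := Fintype.card_pos_iff.mp (by omega)
      set e : β → S := φ (Pi.single b 1) with he
      by_cases hunit : ∃ a : β, IsUnit (e a)
      · obtain ⟨a, hu⟩ := hunit
        set q : (β → S) →ₗ[S] S := (↑hu.unit⁻¹ : S) • LinearMap.proj a with hq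
        have hqdef : ∀ x : β → S, q x = (↑hu.unit⁻¹ : S) * x a := fun x => rfl
        set P : (β → S) →ₗ[S] (β → S) :=
          LinearMap.id - (LinearMap.toSpanSingleton S (β → S) e) ∘ₗ q with hPq
        have hPdef : ∀ x : β → S, P x = x - q x • e := fun x => rfl
        have hqe : q e = 1 := by
          rw [hqdef]
          exact hu.val_inv_mul
        have hPa : ∀ x : β → S, P x a = 0 := by
          intro x
          have h1 : P x a = x a - ((↑hu.unit⁻¹ : S) * x a) * e a := rfl
          have h2 : ((↑hu.unit⁻¹ : S) * x a) * e a = x a * ((↑hu.unit⁻¹ : S) * e a) := by ring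
          rw [h1, h2, hu.val_inv_mul, mul_one, sub_self]
        have hεe : ε e = 0 := (hex e).mpr ⟨Pi.single b 1, rfl⟩
        set ι' : ({x : β // x ≠ a} → S) →ₗ[S] (β → S) :=
          { toFun := fun z x => if h : x = a then 0 else z ⟨x, h⟩
            map_add' := by
              intro z w; funext x; by_cases h : x = a <;> simp [h]
            map_smul' := by
              intro s z; funext x; by_cases h : x = a <;> simp [h] } with hι'
        set j : ({y : α // y ≠ b} → S) →ₗ[S] (α → S) :=
          { toFun := fun f y => if h : y = b then 0 else f ⟨y, h⟩
            map_add' := by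
              intro z w; funext y; by_cases h : y = b <;> simp [h]
            map_smul' := by
              intro s z; funext y; by_cases h : y = b <;> simp [h] } with hj
        set π : (β → S) →ₗ[S] ({x : β // x ≠ a} → S) :=
          LinearMap.funLeft S S Subtype.val with hπ
        have hιa : ∀ z, ι' z a = 0 := fun z => by simp [hι']
        have hιπ : ∀ z : β → S, z a = 0 → ι' (π z) = z := by
          intro z hz
          funext x
          by_cases h : x = a
          · subst h; simpa [hι'] using hz.symm
          · simp [hι', hπ, h, LinearMap.funLeft]
        have hπι : ∀ z, π (ι' z) = z := by
          intro z
          funext x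
          simp [hι', hπ, LinearMap.funLeft, x.2]
        have hjb : ∀ f, j f b = 0 := fun f => by simp [hj]
        have hjval : ∀ f (y : α) (h : y ≠ b), j f y = f ⟨y, h⟩ := fun f y h => by simp [hj, h]
        set φ' := π ∘ₗ P ∘ₗ φ ∘ₗ j with hφ'def
        set ε' := ε ∘ₗ ι' with hε'def
        have hε'surj : Function.Surjective ε' := by
          intro mm
          obtain ⟨x, rfl⟩ := hε mm
          refine ⟨π (P x), ?_⟩
          show ε (ι' (π (P x))) = ε x
          rw [hιπ _ (hPa x), hPdef, map_sub, map_smul, hεe, smul_zero, sub_zero]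
        have hφ'inj : Function.Injective φ' := by
          have h0 : ∀ f, φ' f = 0 → f = 0 := by
            intro f hf0
            have h1 : P (φ (j f)) = 0 := by
              funext x
              by_cases hx : x = a
              · subst hx; exact hPa _
              · have h2 := congrFun (show π (P (φ (j f))) = 0 from hf0) ⟨x, hx⟩
                simpa [hπ, LinearMap.funLeft] using h2
            have h3 : φ (j f) = q (φ (j f)) • e := by
              have h4 := hPdef (φ (j f))
              rw [h1] at h4
              exact sub_eq_zero.mp h4.symm
            have h5 : j f = q (φ (j f)) • (Pi.single b 1 : α → S) := by
              apply hφ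
              rw [map_smul, ← he, ← h3]
            have h6 : q (φ (j f)) = 0 := by
              have h7 := congrFun h5 b
              rw [hjb] at h7
              simpa using h7.symm
            have h8 : j f = 0 := by rw [h5, h6, zero_smul]
            funext y
            have h9 := congrFun h8 y
            rw [hjval f y.1 y.2] at h9
            exact h9
          intro f g hfg
          have := h0 (f - g) (by rw [map_sub, hfg, sub_self])
          rwa [sub_eq_zero] at this
        have hex' : Function.Exact φ' ε' := by
          intro z
          constructor
          · intro hz
            obtain ⟨h, hh⟩ := (hex (ι' z)).mp hz
            set f : {y : α // y ≠ b} → S := fun y => h y.1 with hf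
            refine ⟨f, ?_⟩
            have hjf : j f = h - h b • (Pi.single b 1 : α → S) := by
              funext y
              by_cases hy : y = b
              · subst hy; rw [hjb]; simp
              · rw [hjval f y hy]; simp [hf, hy]
            show π (P (φ (j f))) = z
            have hφjf : φ (j f) = ι' z - h b • e := by
              rw [hjf, map_sub, map_smul, hh, ← he]
            have hqv : q (φ (j f)) = -(h b) := by
              rw [hφjf, map_sub, map_smul, hqe, hqdef, hιa, mul_zero, smul_eq_mul,
                mul_one, zero_sub]
            have hPv : P (φ (j f)) = ι' z := by
              rw [hPdef, hqv, hφjf, neg_smul, sub_neg_eq_add, sub_add_cancel]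
            rw [hPv, hπι]
          · rintro ⟨f, rfl⟩
            show ε (ι' (π (P (φ (j f))))) = 0
            rw [hιπ _ (hPa _), hPdef, map_sub, map_smul, hεe, smul_zero, sub_zero]
            exact (hex (φ (j f))).mpr ⟨j f, rfl⟩
        have hcα' : Fintype.card {y : α // y ≠ b} = k := by
          have h1 : Fintype.card {y : α // ¬ (y = b)}
              = Fintype.card α - Fintype.card {y : α // y = b} :=
            Fintype.card_subtype_compl _
          have h2 : Fintype.card {y : α // y = b} = 1 := Fintype.card_subtype_eq b
          have h3 : Fintype.card {y : α // ¬ (y = b)} = Fintype.card {y : α // y ≠ b} := rfl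
          omega
        have hcβ' : Fintype.card {x : β // x ≠ a} = Fintype.card β - 1 := by
          have h1 : Fintype.card {x : β // ¬ (x = a)}
              = Fintype.card β - Fintype.card {x : β // x = a} :=
            Fintype.card_subtype_compl _
          have h2 : Fintype.card {x : β // x = a} = 1 := Fintype.card_subtype_eq a
          have h3 : Fintype.card {x : β // ¬ (x = a)} = Fintype.card {x : β // x ≠ a} := rfl
          omega
        have hβpos : 0 < Fintype.card β := Fintype.card_pos_iff.mpr ⟨a⟩
        obtain ⟨r, hr, hiso⟩ := IH {y : α // y ≠ b} {x : β // x ≠ a} hcα' M φ' ε'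
          hφ'inj hε'surj hex'
        exact ⟨r, by omega, hiso⟩
      · exfalso
        push_neg at hunit
        have hnil' : ∀ a : β, IsNilpotent (e a) := fun a =>
          hnil _ ((IsLocalRing.mem_maximalIdeal _).mpr (hunit a))
        obtain ⟨s, hs, hann⟩ := exists_ne_zero_ann_of_nilpotent_fun e hnil'
        have h0 : φ (s • (Pi.single b 1 : α → S)) = 0 := by
          rw [map_smul, ← he]
          funext x
          simpa using hann x
        have h1 := hφ (show φ (s • (Pi.single b 1 : α → S)) = φ 0 by rw [h0, map_zero])
        have hsb := congrFun h1 b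
        simp at hsb
        exact hs hsb

end SES


section Resolution
variable {S : Type u} [CommRing S] [IsLocalRing S]

lemma free_of_finite_free_resolution (hnil : ∀ x ∈ IsLocalRing.maximalIdeal S, IsNilpotent x) :
    ∀ (n : ℕ) (c : ℕ → ℕ) (M : Type u) [AddCommGroup M] [Module S M]
      (d : (i : ℕ) → ((Fin (c (i + 1)) → S) →ₗ[S] (Fin (c i) → S)))
      (ε : (Fin (c 0) → S) →ₗ[S] M),
      Function.Surjective ε → Function.Exact (d 0) ε →
      (∀ i : ℕ, Function.Exact (d (i + 1)) (d i)) →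
      (∀ i : ℕ, n < i → c i = 0) →
      ∃ r : ℕ, (r : ℤ) = (∑ i ∈ Finset.range (n + 1), (-1 : ℤ) ^ i * (c i : ℤ)) ∧
        Nonempty ((Fin r → S) ≃ₗ[S] M) := by
  intro n
  induction n with
  | zero =>
      intro c M _ _ d ε hε h₀ hd hc
      have hc1 : c 1 = 0 := hc 1 one_pos
      haveI : IsEmpty (Fin (c 1)) := by rw [hc1]; infer_instance
      have hinj : Function.Injective ε := by
        intro x y hxy
        obtain ⟨w, hw⟩ := (h₀ (x - y)).mp (by rw [map_sub, hxy, sub_self])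
        rw [Subsingleton.elim w 0, map_zero] at hw
        exact sub_eq_zero.mp hw.symm
      exact ⟨c 0, by simp, ⟨LinearEquiv.ofBijective ε ⟨hinj, hε⟩⟩⟩
  | succ n IH =>
      intro c M _ _ d ε hε h₀ hd hc
      have h₀₂ : Function.Exact (d 1) ((d 0).rangeRestrict) := by
        intro x
        have h1 : (d 0).rangeRestrict x = 0 ↔ d 0 x = 0 := by
          simp [Subtype.ext_iff]
        rw [h1]
        exact hd 0 x
      obtain ⟨r', hr', ⟨ψ⟩⟩ := IH (fun i => c (i + 1)) (LinearMap.range (d 0))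
        (fun i => d (i + 1)) ((d 0).rangeRestrict) (LinearMap.surjective_rangeRestrict (d 0))
        h₀₂ (fun i => hd (i + 1)) (fun i hi => hc (i + 1) (by omega))
      set φ : (Fin r' → S) →ₗ[S] (Fin (c 0) → S) :=
        (LinearMap.range (d 0)).subtype ∘ₗ (ψ : (Fin r' → S) →ₗ[S] LinearMap.range (d 0))
        with hφdef
      have hφinj : Function.Injective φ :=
        (LinearMap.range (d 0)).injective_subtype.comp ψ.injective
      have hexφ : Function.Exact φ ε := by
        intro y
        rw [h₀ y]
        constructor
        · intro hy
          refine ⟨ψ.symm ⟨y, LinearMap.mem_range.mpr hy⟩, ?_⟩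
          show ((ψ (ψ.symm ⟨y, _⟩)) : Fin (c 0) → S) = y
          rw [LinearEquiv.apply_symm_apply]
        · rintro ⟨x, rfl⟩
          exact LinearMap.mem_range.mp (ψ x).2
      classical
      obtain ⟨r, hr, hiso⟩ := exists_compl_free hnil r' (Fin r') (Fin (c 0))
        (Fintype.card_fin r') M φ ε hφinj hε hexφ
      refine ⟨r, ?_, hiso⟩
      have hcard : r + r' = c 0 := by simpa using hr
      rw [Finset.sum_range_succ']
      have hneg : ∑ i ∈ Finset.range (n + 1), (-1 : ℤ) ^ (i + 1) * (c (i + 1) : ℤ)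
          = -∑ i ∈ Finset.range (n + 1), (-1 : ℤ) ^ i * (c (i + 1) : ℤ) := by
        rw [← Finset.sum_neg_distrib]
        exact Finset.sum_congr rfl (fun i _ => by ring)
      rw [hneg, ← hr']
      have : (r : ℤ) + (r' : ℤ) = (c 0 : ℤ) := by exact_mod_cast hcard
      simp only [pow_zero, one_mul]
      linarith

end Resolution

section Conj
variable {S : Type*} [CommRing S] {A B C A' B' C' : Type*}
  [AddCommGroup A] [AddCommGroup B] [AddCommGroup C] [AddCommGroup A'] [AddCommGroup B']
  [AddCommGroup C']
  [Module S A] [Module S B] [Module S C] [Module S A'] [Module S B'] [Module S C']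

lemma Function.Exact.conj_equiv {f : A →ₗ[S] B} {g : B →ₗ[S] C}
    (h : Function.Exact f g) (e1 : A ≃ₗ[S] A') (e2 : B ≃ₗ[S] B') :
    Function.Exact (e2.toLinearMap ∘ₗ f ∘ₗ e1.symm.toLinearMap)
      (g ∘ₗ e2.symm.toLinearMap) := by
  intro y
  constructor
  · intro hy
    obtain ⟨x, hx⟩ := (h (e2.symm y)).mp hy
    exact ⟨e1 x, by simp [hx]⟩
  · rintro ⟨x, rfl⟩
    simpa using (h (f (e1.symm x))).mpr ⟨e1.symm x, rfl⟩

lemma Function.Exact.conj_equiv₃ {f : A →ₗ[S] B} {g : B →ₗ[S] C}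
    (h : Function.Exact f g) (e1 : A ≃ₗ[S] A') (e2 : B ≃ₗ[S] B') (e3 : C ≃ₗ[S] C') :
    Function.Exact (e2.toLinearMap ∘ₗ f ∘ₗ e1.symm.toLinearMap)
      (e3.toLinearMap ∘ₗ g ∘ₗ e2.symm.toLinearMap) := by
  intro y
  constructor
  · intro hy
    have hy' : g (e2.symm y) = 0 := by
      have : e3 (g (e2.symm y)) = 0 := hy
      simpa using this
    obtain ⟨x, hx⟩ := (h (e2.symm y)).mp hy'
    exact ⟨e1 x, by simp [hx]⟩
  · rintro ⟨x, rfl⟩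
    show e3 (g (e2.symm (e2 (f (e1.symm x))))) = 0
    rw [LinearEquiv.symm_apply_apply, (h (f (e1.symm x))).mpr ⟨e1.symm x, rfl⟩, map_zero]

end Conj

lemma Function.Exact.of_funext {A B C : Type*} [Zero C] {f f' : A → B} {g g' : B → C}
    (h : Function.Exact f g) (hf : f' = f) (hg : g' = g) : Function.Exact f' g' :=
  hf ▸ hg ▸ h


/-!
STATEMENT 18: for a connected scheme `X` and a quasi-coherent module `G` admitting,
Zariski-locally, finite resolutions by finite free modules, the function
`x ↦ Σ (−1)^i rank(F_{i,x})` is a well-defined locally constant function independent of the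
chosen local resolution, and is `≥ 0` whenever `G ≠ 0`.

We formalize the underlying (stalkwise) algebraic content, as identified in the context:
over a local ring `R` (the stalk `O_{X,x}`), for any two finite free resolutions
`0 → F_n → … → F_0 → M → 0` and `0 → F'_m → … → F'_0 → M → 0` of the same module `M`,
the alternating sums of the ranks agree (this is the well-definedness/independence of the
rank), and the common value is nonnegative when `M ≠ 0`.  A resolution is encoded by its rank
function `c : ℕ → ℕ` (vanishing above the length), differentials
`d i : R^{c(i+1)} → R^{c i}` and an augmentation `ε : R^{c 0} → M`, subject to surjectivity
of `ε` and exactness everywhere.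
-/

theorem alternating_sum_of_ranks_well_defined
    (R : Type*) [CommRing R] [IsLocalRing R]
    (M : Type*) [AddCommGroup M] [Module R M]
    (n : ℕ) (c : ℕ → ℕ)
    (d : (i : ℕ) → ((Fin (c (i + 1)) → R) →ₗ[R] (Fin (c i) → R)))
    (ε : (Fin (c 0) → R) →ₗ[R] M)
    (hε : Function.Surjective ε) (h₀ : Function.Exact (d 0) ε)
    (hd : ∀ i : ℕ, Function.Exact (d (i + 1)) (d i))
    (hc : ∀ i : ℕ, n < i → c i = 0)
    (m : ℕ) (c' : ℕ → ℕ)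
    (d' : (i : ℕ) → ((Fin (c' (i + 1)) → R) →ₗ[R] (Fin (c' i) → R)))
    (ε' : (Fin (c' 0) → R) →ₗ[R] M)
    (hε' : Function.Surjective ε') (h₀' : Function.Exact (d' 0) ε')
    (hd' : ∀ i : ℕ, Function.Exact (d' (i + 1)) (d' i))
    (hc' : ∀ i : ℕ, m < i → c' i = 0) :
    (∑ i ∈ Finset.range (n + 1), (-1 : ℤ) ^ i * (c i : ℤ)) =
      (∑ i ∈ Finset.range (m + 1), (-1 : ℤ) ^ i * (c' i : ℤ)) ∧
    (Nontrivial M → 0 ≤ ∑ i ∈ Finset.range (n + 1), (-1 : ℤ) ^ i * (c i : ℤ)) := by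
  classical
  haveI := (IsLocalRing.maximalIdeal.isMaximal R).isPrime
  obtain ⟨p, hp, -⟩ :=
    Ideal.exists_minimalPrimes_le (bot_le (a := IsLocalRing.maximalIdeal R))
  haveI hpp : p.IsPrime := hp.1.1
  have hpmin : p ∈ minimalPrimes R := hp
  have hnil : ∀ x ∈ IsLocalRing.maximalIdeal (Localization p.primeCompl), IsNilpotent x :=
    fun x hx => (haveI := Ring.KrullDimLE.of_isLocalization p hpmin (Localization p.primeCompl); Ring.KrullDimLE.isNilpotent_iff_mem_maximalIdeal.mpr hx)
  set S := Localization p.primeCompl with hS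
  -- base change isomorphisms for finite free modules
  let bc : (k : ℕ) → (S ⊗[R] (Fin k → R)) ≃ₗ[S] (Fin k → S) := fun k =>
    ((Pi.basisFun R (Fin k)).baseChange S).equiv (Pi.basisFun S (Fin k)) (Equiv.refl _)
  -- process one resolution
  have process : ∀ (n : ℕ) (c : ℕ → ℕ)
      (d : (i : ℕ) → ((Fin (c (i + 1)) → R) →ₗ[R] (Fin (c i) → R)))
      (ε : (Fin (c 0) → R) →ₗ[R] M),
      Function.Surjective ε → Function.Exact (d 0) ε →
      (∀ i : ℕ, Function.Exact (d (i + 1)) (d i)) →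
      (∀ i : ℕ, n < i → c i = 0) →
      ∃ r : ℕ, (r : ℤ) = (∑ i ∈ Finset.range (n + 1), (-1 : ℤ) ^ i * (c i : ℤ)) ∧
        Nonempty ((Fin r → S) ≃ₗ[S] (S ⊗[R] M)) := by
    intro n c d ε hε h₀ hd hc
    let D : (i : ℕ) → ((Fin (c (i + 1)) → S) →ₗ[S] (Fin (c i) → S)) := fun i =>
      (bc (c i)).toLinearMap ∘ₗ (d i).baseChange S ∘ₗ (bc (c (i + 1))).symm.toLinearMap
    let E : (Fin (c 0) → S) →ₗ[S] (S ⊗[R] M) :=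
      ε.baseChange S ∘ₗ (bc (c 0)).symm.toLinearMap
    have hbase : ∀ i, Function.Exact ((d (i + 1)).baseChange S) ((d i).baseChange S) :=
      fun i => Function.Exact.of_funext (Module.Flat.lTensor_exact S (hd i))
        (LinearMap.baseChange_eq_ltensor _) (LinearMap.baseChange_eq_ltensor _)
    have hbase0 : Function.Exact ((d 0).baseChange S) (ε.baseChange S) :=
      Function.Exact.of_funext (Module.Flat.lTensor_exact S h₀)
        (LinearMap.baseChange_eq_ltensor _) (LinearMap.baseChange_eq_ltensor _)
    have hD : ∀ i, Function.Exact (D (i + 1)) (D i) := fun i =>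
      (hbase i).conj_equiv₃ (bc (c (i + 2))) (bc (c (i + 1))) (bc (c i))
    have hE0 : Function.Exact (D 0) E :=
      hbase0.conj_equiv (bc (c 1)) (bc (c 0))
    have hEsurj : Function.Surjective E := by
      have h1 : Function.Surjective (ε.baseChange S) := by
        rw [LinearMap.baseChange_eq_ltensor]
        exact LinearMap.lTensor_surjective S hε
      exact h1.comp (bc (c 0)).symm.surjective
    -- quotient model of S ⊗ M living in the same universe as S
    let M₀ := (Fin (c 0) → S) ⧸ LinearMap.ker E
    let ε₀ : (Fin (c 0) → S) →ₗ[S] M₀ := (LinearMap.ker E).mkQ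
    have hε₀ : Function.Surjective ε₀ := Submodule.mkQ_surjective _
    have h₀₀ : Function.Exact (D 0) ε₀ := by
      intro y
      rw [show (ε₀ y = 0) ↔ (E y = 0) by
        rw [show ε₀ y = Submodule.Quotient.mk y from rfl, Submodule.Quotient.mk_eq_zero,
          LinearMap.mem_ker]]
      exact hE0 y
    obtain ⟨r, hrsum, ⟨iso⟩⟩ := free_of_finite_free_resolution hnil n c M₀ D ε₀ hε₀ h₀₀ hD hc
    exact ⟨r, hrsum, ⟨iso.trans (LinearMap.quotKerEquivOfSurjective E hEsurj)⟩⟩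
  obtain ⟨r, hrsum, ⟨iso⟩⟩ := process n c d ε hε h₀ hd hc
  obtain ⟨r', hrsum', ⟨iso'⟩⟩ := process m c' d' ε' hε' h₀' hd' hc'
  have hrr : r = r' := eq_of_fin_equiv S (iso.trans iso'.symm)
  constructor
  · rw [← hrsum, ← hrsum', hrr]
  · intro _
    rw [← hrsum]
    exact Int.natCast_nonneg r
end

section
/- Let (R, m) be a local ring and M a finitely generated R-module admitting a finite free resolution. If the maximal ideal m is a weak associated prime of R (i.e. there exists a ∈ R whose annihilator has radical m; e.g. R has depth 0 in the polynomial-depth sense), then M is free. Consequently, for a scheme X and a sheaf G of finite homological dimension, the stalk G_x is free of rank equal to rank(G) at every weak associated point x of X. -/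
/-!
STATEMENT 19: let `(R, m)` be a local ring and `M` a finitely generated `R`-module admitting
a finite free resolution.  If the maximal ideal `m` is a weak associated prime of `R`
(i.e. there exists `a ∈ R` whose annihilator has radical equal to `m`), then `M` is free;
moreover (capturing the consequence about stalks of a sheaf of finite homological dimension at
weak associated points) `M` is then free of rank equal to the alternating sum
`Σ (−1)^i rank F_i` of the ranks in the resolution — the "rank" of `M`.

A finite free resolution `0 → F_n → … → F_0 → M → 0` is encoded by its rank function
`c : ℕ → ℕ` (vanishing above the length `n`), differentials `d i : R^{c(i+1)} → R^{c i}`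
and an augmentation `ε : R^{c 0} → M`, subject to surjectivity of `ε` and exactness.
-/

open IsLocalRing

section SplitAt
variable {R : Type*} [CommRing R] {p : ℕ}

def splitAt (j₀ : Fin (p + 1)) : (Fin (p + 1) → R) ≃ₗ[R] R × (Fin p → R) :=
  { (Fin.insertNthEquiv (fun _ => R) j₀).symm with
    map_add' := fun _ _ => rfl
    map_smul' := fun _ _ => rfl }

@[simp] lemma splitAt_apply (j₀ : Fin (p + 1)) (v : Fin (p + 1) → R) :
    splitAt j₀ v = (v j₀, fun j => v (j₀.succAbove j)) := rfl

@[simp] lemma splitAt_symm_apply_same (j₀ : Fin (p + 1)) (x : R × (Fin p → R)) :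
    (splitAt j₀).symm x j₀ = x.1 := by
  simp [splitAt, Fin.insertNthEquiv]

@[simp] lemma splitAt_symm_apply_succAbove (j₀ : Fin (p + 1)) (x : R × (Fin p → R)) (j : Fin p) :
    (splitAt j₀).symm x (j₀.succAbove j) = x.2 j := by
  simp [splitAt, Fin.insertNthEquiv]

lemma splitAt_symm_single (j₀ : Fin (p + 1)) :
    (splitAt (R := R) j₀).symm (1, 0) = Pi.single j₀ 1 := by
  funext j
  refine Fin.succAboveCases j₀ ?_ (fun i => ?_) j
  · simp
  · rw [splitAt_symm_apply_succAbove, Pi.single_eq_of_ne (Fin.succAbove_ne j₀ i)]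
    rfl

end SplitAt

section Split
variable {R : Type*} [CommRing R] [IsLocalRing R]

lemma split_of_injective
    (H : ∀ s : Finset R, (∀ x ∈ s, x ∈ maximalIdeal R) → ∃ b : R, b ≠ 0 ∧ ∀ x ∈ s, x * b = 0) :
    ∀ (p q : ℕ) (φ : (Fin p → R) →ₗ[R] (Fin q → R)), Function.Injective φ →
      p ≤ q ∧ ∃ e : (Fin q → R) ≃ₗ[R] (Fin p → R) × (Fin (q - p) → R),
        ∀ v, e (φ v) = (v, 0) := by
  intro p
  induction p with
  | zero =>
    intro q φ hφ
    refine ⟨Nat.zero_le q,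
      ⟨{ toFun := fun w => (0, w)
         invFun := fun x => x.2
         map_add' := fun a b => Prod.ext (funext fun i => i.elim0) rfl
         map_smul' := fun r a => Prod.ext (funext fun i => i.elim0) rfl
         left_inv := fun w => rfl
         right_inv := fun x => Prod.ext (Subsingleton.elim _ _) rfl }, fun v => ?_⟩⟩
    refine Prod.ext (Subsingleton.elim _ _) ?_
    show φ v = 0
    rw [Subsingleton.elim v 0, map_zero]
  | succ p ih =>
    intro q φ hφ
    classical
    have hunit : ∃ (i : Fin q) (j : Fin (p + 1)), IsUnit (φ (Pi.single j 1) i) := by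
      by_contra h
      push_neg at h
      obtain ⟨b, hb0, hb⟩ := H
        (Finset.image (fun ij : Fin q × Fin (p + 1) => φ (Pi.single ij.2 1) ij.1) Finset.univ)
        (by
          intro x hx
          obtain ⟨ij, -, rfl⟩ := Finset.mem_image.mp hx
          exact h ij.1 ij.2)
      apply hb0
      have h1 : φ (Pi.single (0 : Fin (p + 1)) b) = 0 := by
        have h2 : (Pi.single (0 : Fin (p + 1)) b : Fin (p + 1) → R)
            = b • (Pi.single 0 1 : Fin (p + 1) → R) := by
          rw [← Pi.single_smul, smul_eq_mul, mul_one]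
        rw [h2, map_smul]
        funext i
        simp only [Pi.smul_apply, smul_eq_mul, Pi.zero_apply, mul_comm b]
        exact hb _ (Finset.mem_image.mpr ⟨(i, 0), Finset.mem_univ _, rfl⟩)
      have h3 := hφ (h1.trans (map_zero φ).symm)
      have h4 := congrFun h3 0
      simpa using h4
    obtain ⟨i₀, j₀, hu⟩ := hunit
    cases q with
    | zero => exact i₀.elim0
    | succ q' =>
      set u : Rˣ := hu.unit with hu'
      have huval : (u : R) = φ (Pi.single j₀ 1) i₀ := rfl
      set S : (Fin (p + 1) → R) ≃ₗ[R] R × (Fin p → R) := splitAt j₀ with hS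
      set T : (Fin (q' + 1) → R) ≃ₗ[R] R × (Fin q' → R) := splitAt i₀ with hT
      set Φ : (R × (Fin p → R)) →ₗ[R] R × (Fin q' → R) :=
        T.toLinearMap ∘ₗ φ ∘ₗ S.symm.toLinearMap with hΦ
      have hΦ10 : (Φ (1, 0)).1 = (u : R) := by
        rw [huval]
        show (T (φ (S.symm (1, 0)))).1 = _
        rw [hS, splitAt_symm_single]
        rfl
      set lam : (Fin p → R) →ₗ[R] R :=
        LinearMap.fst R R (Fin q' → R) ∘ₗ Φ ∘ₗ LinearMap.inr R R (Fin p → R) with hlam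
      have hΦfst : ∀ (r : R) (v : Fin p → R), (Φ (r, v)).1 = u * r + lam v := by
        intro r v
        have hrv : ((r, v) : R × (Fin p → R)) = r • ((1 : R), (0 : Fin p → R)) + (0, v) := by
          ext <;> simp
        rw [hrv, map_add, Prod.fst_add, map_smul, Prod.smul_fst, hΦ10, smul_eq_mul, mul_comm r]
        rfl
      set τ : (R × (Fin p → R)) ≃ₗ[R] R × (Fin p → R) :=
        { toFun := fun x => (u * x.1 + lam x.2, x.2)
          invFun := fun x => ((u⁻¹ : Rˣ) * (x.1 - lam x.2), x.2)
          map_add' := fun x y => by ext <;> simp <;> ring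
          map_smul' := fun r x => by ext <;> simp <;> ring
          left_inv := fun x => by ext <;> simp
          right_inv := fun x => by ext <;> simp } with hτ
      set w₀ : Fin q' → R := (Φ (τ.symm (1, 0))).2 with hw₀
      set ρ : (R × (Fin q' → R)) ≃ₗ[R] R × (Fin q' → R) :=
        { toFun := fun x => (x.1, x.2 - x.1 • w₀)
          invFun := fun x => (x.1, x.2 + x.1 • w₀)
          map_add' := fun x y => by ext <;> [skip; skip] <;> simp [add_smul] <;> abel
          map_smul' := fun r x => by ext <;> simp [smul_sub, mul_smul]
          left_inv := fun x => by ext <;> simp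
          right_inv := fun x => by ext <;> simp } with hρ
      set φ' : (Fin p → R) →ₗ[R] (Fin q' → R) :=
        LinearMap.snd R R (Fin q' → R) ∘ₗ Φ ∘ₗ τ.symm.toLinearMap
          ∘ₗ LinearMap.inr R R (Fin p → R) with hφ'def
      have keyfst : ∀ (x : R × (Fin p → R)), (Φ (τ.symm x)).1 = x.1 := by
        intro x
        obtain ⟨s, v⟩ := x
        show (Φ ((u⁻¹ : Rˣ) * (s - lam v), v)).1 = s
        rw [hΦfst, Units.mul_inv_cancel_left, sub_add_cancel]
      have key : ∀ (x : R × (Fin p → R)), ρ (Φ (τ.symm x)) = (x.1, φ' x.2) := by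
        intro x
        obtain ⟨s, v⟩ := x
        have hsplit : τ.symm ((s, v) : R × (Fin p → R)) = s • τ.symm (1, 0) + τ.symm (0, v) := by
          rw [← map_smul, ← map_add]
          congr 1
          ext <;> simp
        refine Prod.ext ?_ ?_
        · exact keyfst (s, v)
        · show (Φ (τ.symm (s, v))).2 - (Φ (τ.symm (s, v))).1 • w₀ = φ' v
          rw [keyfst (s, v)]
          have h5 : (Φ (τ.symm ((s, v) : R × (Fin p → R)))).2 = s • w₀ + φ' v := by
            rw [hsplit, map_add, map_smul, Prod.snd_add, Prod.smul_snd]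
            rfl
          rw [h5]
          abel
      have hφ'inj : Function.Injective φ' := by
        have hΦinj : Function.Injective Φ := by
          intro x y hxy
          have := hφ (S.symm.injective.eq_iff.mpr rfl ▸ (T.injective hxy : φ (S.symm x) = φ (S.symm y)))
          exact S.symm.injective this
        intro v w hvw
        have h1 : Φ (τ.symm (0, v)) = Φ (τ.symm (0, w)) := by
          apply ρ.injective
          rw [key, key, hvw]
        have h2 := τ.symm.injective (hΦinj h1)
        exact (Prod.ext_iff.mp h2).2
      obtain ⟨hpq, e', he'⟩ := ih q' φ' hφ'inj
      refine ⟨by omega, ?_⟩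
      have hsub : q' + 1 - (p + 1) = q' - p := by omega
      set castE : (Fin (q' - p) → R) ≃ₗ[R] (Fin (q' + 1 - (p + 1)) → R) :=
        LinearEquiv.funCongrLeft R R (finCongr hsub) with hcastE
      set asc : (R × ((Fin p → R) × (Fin (q' - p) → R))) ≃ₗ[R]
          ((R × (Fin p → R)) × (Fin (q' - p) → R)) :=
        { toFun := fun x => ((x.1, x.2.1), x.2.2)
          invFun := fun x => (x.1.1, (x.1.2, x.2))
          map_add' := fun _ _ => rfl
          map_smul' := fun _ _ => rfl
          left_inv := fun _ => rfl
          right_inv := fun _ => rfl } with hasc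
      set e : (Fin (q' + 1) → R) ≃ₗ[R] (Fin (p + 1) → R) × (Fin (q' + 1 - (p + 1)) → R) :=
        T ≪≫ₗ ρ ≪≫ₗ ((LinearEquiv.refl R R).prodCongr e') ≪≫ₗ asc
          ≪≫ₗ ((τ.symm ≪≫ₗ S.symm).prodCongr castE) with he''
      refine ⟨e, fun v => ?_⟩
      have h2 : ρ (T (φ v)) = ((τ (S v)).1, φ' (τ (S v)).2) := by
        have h3 := key (τ (S v))
        rw [LinearEquiv.symm_apply_apply] at h3
        rw [← h3]
        congr 1
        show T (φ v) = T (φ (S.symm (S v)))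
        rw [LinearEquiv.symm_apply_apply]
      show (((τ.symm ≪≫ₗ S.symm).prodCongr castE) (asc (((LinearEquiv.refl R R).prodCongr e')
        (ρ (T (φ v)))))) = (v, 0)
      rw [h2]
      have h6 : ((LinearEquiv.refl R R).prodCongr e') ((τ (S v)).1, φ' (τ (S v)).2)
          = ((τ (S v)).1, ((τ (S v)).2, 0)) := by
        refine Prod.ext rfl ?_
        exact he' (τ (S v)).2
      rw [h6]
      show ((τ.symm ≪≫ₗ S.symm) ((τ (S v)).1, (τ (S v)).2), castE 0) = (v, 0)
      rw [map_zero]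
      refine Prod.ext ?_ rfl
      show S.symm (τ.symm ((τ (S v)).1, (τ (S v)).2)) = v
      rw [Prod.mk.eta, LinearEquiv.symm_apply_apply, LinearEquiv.symm_apply_apply]
end Split


section Ann
variable {R : Type*} [CommRing R] [IsLocalRing R]

lemma common_ann
    (hweak : ∃ a : R,
      ((Ideal.span {a} : Submodule R R).annihilator).radical = IsLocalRing.maximalIdeal R) :
    ∀ s : Finset R, (∀ x ∈ s, x ∈ maximalIdeal R) → ∃ b : R, b ≠ 0 ∧ ∀ x ∈ s, x * b = 0 := by
  obtain ⟨a, ha⟩ := hweak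
  have hann : ∀ r : R, r ∈ (Ideal.span {a} : Submodule R R).annihilator ↔ r * a = 0 := by
    intro r
    rw [Submodule.mem_annihilator]
    constructor
    · intro h; exact h a (Ideal.subset_span rfl)
    · intro h n hn
      obtain ⟨m, rfl⟩ := Ideal.mem_span_singleton'.mp hn
      rw [smul_eq_mul, show r * (m * a) = m * (r * a) by ring, h, mul_zero]
  have ha0 : a ≠ 0 := by
    rintro rfl
    have : (1 : R) ∈ maximalIdeal R := by
      rw [← ha, Ideal.mem_radical_iff]
      exact ⟨1, by rw [pow_one, hann]; simp⟩
    exact (maximalIdeal.isMaximal R).ne_top (Ideal.eq_top_of_isUnit_mem _ this isUnit_one)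
  intro s hs
  suffices h : ∃ c : R, c * a ≠ 0 ∧ ∀ x ∈ s, x * (c * a) = 0 by
    obtain ⟨c, hc1, hc2⟩ := h
    exact ⟨c * a, hc1, hc2⟩
  classical
  induction s using Finset.induction_on with
  | empty => exact ⟨1, by simpa using ha0, by simp⟩
  | @insert x s hxs ih =>
    obtain ⟨c, hc1, hc2⟩ := ih (fun y hy => hs y (Finset.mem_insert_of_mem hy))
    have hxm : x ∈ maximalIdeal R := hs x (Finset.mem_insert_self _ _)
    rw [← ha, Ideal.mem_radical_iff] at hxm
    obtain ⟨k, hk⟩ := hxm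
    rw [hann] at hk
    have hex : ∃ j : ℕ, x ^ j * (c * a) = 0 := ⟨k, by rw [mul_left_comm, hk, mul_zero]⟩
    set j := Nat.find hex with hj
    have hjspec : x ^ j * (c * a) = 0 := Nat.find_spec hex
    have hj0 : j ≠ 0 := by
      intro h0
      rw [h0, pow_zero, one_mul] at hjspec
      exact hc1 hjspec
    refine ⟨x ^ (j - 1) * c, ?_, ?_⟩
    · intro h0
      refine Nat.find_min hex (m := j - 1) (Nat.sub_lt (Nat.pos_of_ne_zero hj0) one_pos) ?_
      rw [← h0]; ring
    · intro y hy
      rcases Finset.mem_insert.mp hy with heq | hy'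
      · rw [heq, show x * (x ^ (j-1) * c * a) = x ^ (j - 1 + 1) * (c * a) by rw [pow_succ]; ring,
          Nat.sub_add_cancel (Nat.pos_of_ne_zero hj0), hjspec]
      · rw [show y * (x ^ (j-1) * c * a) = x ^ (j-1) * (y * (c * a)) by ring, hc2 y hy', mul_zero]

end Ann


theorem free_at_weak_associated_point
    (R : Type*) [CommRing R] [IsLocalRing R]
    (M : Type*) [AddCommGroup M] [Module R M]
    (n : ℕ) (c : ℕ → ℕ)
    (d : (i : ℕ) → ((Fin (c (i + 1)) → R) →ₗ[R] (Fin (c i) → R)))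
    (ε : (Fin (c 0) → R) →ₗ[R] M)
    (hε : Function.Surjective ε) (h₀ : Function.Exact (d 0) ε)
    (hd : ∀ i : ℕ, Function.Exact (d (i + 1)) (d i))
    (hc : ∀ i : ℕ, n < i → c i = 0)
    -- `m ∈ WeakAss(R)`: some element of `R` has annihilator with radical the maximal ideal
    (hweak : ∃ a : R,
      ((Ideal.span {a} : Submodule R R).annihilator).radical = IsLocalRing.maximalIdeal R) :
    Module.Free R M ∧
      (Module.finrank R M : ℤ) =
        ∑ i ∈ Finset.range (n + 1), (-1 : ℤ) ^ i * (c i : ℤ) := by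
  classical
  have H := common_ann hweak
  -- downward induction: the image of each differential is a split image of a free module
  have key : ∀ j i : ℕ, i + j = n →
      ∃ (t : ℕ) (ψ : (Fin t → R) →ₗ[R] (Fin (c i) → R)),
      Function.Injective ψ ∧ LinearMap.range ψ = LinearMap.range (d i) ∧
      (t : ℤ) = ∑ l ∈ Finset.range (j + 1), (-1 : ℤ) ^ l * (c (i + 1 + l) : ℤ) := by
    intro j
    induction j with
    | zero =>
      intro i hi
      haveI : IsEmpty (Fin (c (i + 1))) := by
        rw [hc (i + 1) (by omega)]; infer_instance
      refine ⟨0, 0, ?_, ?_, ?_⟩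
      · intro a b _; exact Subsingleton.elim a b
      · rw [LinearMap.range_zero]
        symm
        rw [LinearMap.range_eq_bot]
        exact LinearMap.ext fun x => by rw [Subsingleton.elim x 0, map_zero]; rfl
      · simp [hc (i + 1) (by omega)]
    | succ j ih =>
      intro i hij
      obtain ⟨t, ψ, hinj, hrange, hsum⟩ := ih (i + 1) (by omega)
      have hker : LinearMap.ker (d i) = LinearMap.range ψ := by
        rw [LinearMap.exact_iff.mp (hd i), hrange]
      obtain ⟨hle, e, he⟩ := split_of_injective H t (c (i + 1)) ψ hinj
      set χ : (Fin (c (i + 1) - t) → R) →ₗ[R] (Fin (c i) → R) :=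
        d i ∘ₗ e.symm.toLinearMap ∘ₗ LinearMap.inr R (Fin t → R) (Fin (c (i + 1) - t) → R)
        with hχ
      have hesymm : ∀ a : Fin t → R, e.symm (a, 0) = ψ a := by
        intro a
        rw [← he a, LinearEquiv.symm_apply_apply]
      refine ⟨c (i + 1) - t, χ, ?_, ?_, ?_⟩
      · -- injective
        intro w w' hw
        have h1 : e.symm (0, w) - e.symm (0, w') ∈ LinearMap.ker (d i) := by
          rw [LinearMap.mem_ker, map_sub]
          exact sub_eq_zero.mpr hw
        rw [hker] at h1
        obtain ⟨a, ha⟩ := h1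
        have h2 : e (ψ a) = e (e.symm (0, w) - e.symm (0, w')) := by rw [ha]
        rw [he, map_sub, LinearEquiv.apply_symm_apply, LinearEquiv.apply_symm_apply] at h2
        have h3 := congrArg Prod.snd h2
        simpa [sub_eq_zero] using h3.symm
      · -- range
        apply le_antisymm
        · rintro x ⟨w, rfl⟩
          exact ⟨e.symm (0, w), rfl⟩
        · rintro x ⟨y, rfl⟩
          have hy : y = ψ (e y).1 + e.symm (0, (e y).2) := by
            rw [← hesymm, ← map_add]
            have : ((e y).1, (0 : Fin (c (i+1) - t) → R)) + (0, (e y).2) = e y := by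
              ext <;> simp
            rw [this, LinearEquiv.symm_apply_apply]
          refine ⟨(e y).2, ?_⟩
          have hψk : d i (ψ (e y).1) = 0 := by
            have : ψ (e y).1 ∈ LinearMap.ker (d i) := by
              rw [hker]; exact ⟨(e y).1, rfl⟩
            simpa using this
          calc χ (e y).2 = d i (e.symm (0, (e y).2)) := rfl
            _ = d i (ψ (e y).1) + d i (e.symm (0, (e y).2)) := by rw [hψk, zero_add]
            _ = d i y := by rw [← map_add, ← hy]
      · -- the rank computation
        rw [Nat.cast_sub hle, hsum,
          Finset.sum_range_succ' (fun l => (-1 : ℤ) ^ l * (c (i + 1 + l) : ℤ)) (j + 1)]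
        simp only [pow_succ, pow_zero, one_mul, Nat.add_zero]
        rw [show (∑ l ∈ Finset.range (j + 1), (-1 : ℤ) ^ l * (-1) * (c (i + 1 + (l + 1)) : ℤ))
            = -∑ l ∈ Finset.range (j + 1), (-1 : ℤ) ^ l * (c (i + 1 + 1 + l) : ℤ) from ?_]
        · ring
        · rw [← Finset.sum_neg_distrib]
          refine Finset.sum_congr rfl fun l _ => ?_
          rw [show i + 1 + (l + 1) = i + 1 + 1 + l by omega]
          ring
  -- conclude
  obtain ⟨t, ψ, hinj, hrange, hsum⟩ := key n 0 (by omega)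
  have hker : LinearMap.ker ε = LinearMap.range ψ := by
    rw [LinearMap.exact_iff.mp h₀, hrange]
  obtain ⟨hle, e, he⟩ := split_of_injective H t (c 0) ψ hinj
  have hesymm : ∀ a : Fin t → R, e.symm (a, 0) = ψ a := by
    intro a
    rw [← he a, LinearEquiv.symm_apply_apply]
  set θ : (Fin (c 0 - t) → R) →ₗ[R] M :=
    ε ∘ₗ e.symm.toLinearMap ∘ₗ LinearMap.inr R (Fin t → R) (Fin (c 0 - t) → R) with hθ
  have hbij : Function.Bijective θ := by
    constructor
    · intro w w' hw
      have h1 : e.symm (0, w) - e.symm (0, w') ∈ LinearMap.ker ε := by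
        rw [LinearMap.mem_ker, map_sub]
        exact sub_eq_zero.mpr hw
      rw [hker] at h1
      obtain ⟨a, ha⟩ := h1
      have h2 : e (ψ a) = e (e.symm (0, w) - e.symm (0, w')) := by rw [ha]
      rw [he, map_sub, LinearEquiv.apply_symm_apply, LinearEquiv.apply_symm_apply] at h2
      have h3 := congrArg Prod.snd h2
      simpa [sub_eq_zero] using h3.symm
    · intro m
      obtain ⟨x, hx⟩ := hε m
      have hx' : x = ψ (e x).1 + e.symm (0, (e x).2) := by
        rw [← hesymm, ← map_add]
        have : ((e x).1, (0 : Fin (c 0 - t) → R)) + (0, (e x).2) = e x := by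
          ext <;> simp
        rw [this, LinearEquiv.symm_apply_apply]
      refine ⟨(e x).2, ?_⟩
      have hψk : ε (ψ (e x).1) = 0 := by
        have : ψ (e x).1 ∈ LinearMap.ker ε := by
          rw [hker]; exact ⟨(e x).1, rfl⟩
        simpa using this
      calc θ (e x).2 = ε (e.symm (0, (e x).2)) := rfl
        _ = ε (ψ (e x).1) + ε (e.symm (0, (e x).2)) := by rw [hψk, zero_add]
        _ = ε x := by rw [← map_add, ← hx']
        _ = m := hx
  set equiv : (Fin (c 0 - t) → R) ≃ₗ[R] M := LinearEquiv.ofBijective θ hbij with hequiv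
  have hfree : Module.Free R M := Module.Free.of_equiv equiv
  refine ⟨hfree, ?_⟩
  have hfr : Module.finrank R M = c 0 - t := by
    rw [← equiv.finrank_eq, Module.finrank_fin_fun]
  rw [hfr, Nat.cast_sub hle, hsum]
  have h1 : ∑ i ∈ Finset.range (n + 2), (-1 : ℤ) ^ i * (c i : ℤ)
      = ∑ i ∈ Finset.range (n + 1), (-1 : ℤ) ^ i * (c i : ℤ) := by
    rw [Finset.sum_range_succ, hc (n + 1) (by omega)]
    simp
  rw [← h1, Finset.sum_range_succ' (fun i => (-1 : ℤ) ^ i * (c i : ℤ)) (n + 1)]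
  simp only [pow_succ, pow_zero, one_mul]
  rw [show (∑ l ∈ Finset.range (n + 1), (-1 : ℤ) ^ l * (-1) * (c (l + 1) : ℤ))
      = -∑ l ∈ Finset.range (n + 1), (-1 : ℤ) ^ l * (c (0 + 1 + l) : ℤ) from ?_]
  · ring
  · rw [← Finset.sum_neg_distrib]
    refine Finset.sum_congr rfl fun l _ => ?_
    rw [show l + 1 = 0 + 1 + l by omega]
    ring
end
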